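/- arXiv:1511.02747 — 5 statements merged into one kernel-verified Lean document; each statement's English description precedes it below -/
import Mathlib

section
/- The point (1,1,1) is not the sum of two lattice points of the tetrahedron P with vertices (0,0,0), (1,0,0), (0,1,0), (1,1,2); i.e., there do not exist x, y ∈ P ∩ ℤ³ with x + y = (1,1,1). -/
open MeasureTheory Pointwise

/-- The lattice points of `ℝ^n`: points with all coordinates integers. -/
def latticePts (n : ℕ) : Set (Fin n → ℝ) :=
  {x | ∀ i, ∃ z : ℤ, x i = (z : ℝ)}

/-- The `h`-fold sumset of `X ⊆ ℝ^n`. -/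
def sumset (n h : ℕ) (X : Set (Fin n → ℝ)) : Set (Fin n → ℝ) :=
  {y | ∃ f : Fin h → (Fin n → ℝ), (∀ i, f i ∈ X) ∧ y = ∑ i, f i}

/-- The dilation `h ∗ X = {h • x : x ∈ X}`. -/
def dilate (n h : ℕ) (X : Set (Fin n → ℝ)) : Set (Fin n → ℝ) :=
  {y | ∃ x ∈ X, y = (h : ℝ) • x}

/-- `P` is a lattice polytope in `ℝ^n`: the convex hull of a nonempty finite set of
lattice points. -/
def IsLatticePolytope (n : ℕ) (P : Set (Fin n → ℝ)) : Prop :=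
  ∃ S : Finset (Fin n → ℝ), S.Nonempty ∧ ↑S ⊆ latticePts n ∧ P = convexHull ℝ (S : Set (Fin n → ℝ))

theorem tetrahedron_no_rep :
    let P : Set (Fin 3 → ℝ) := convexHull ℝ {![0,0,0], ![1,0,0], ![0,1,0], ![1,1,2]}
    ¬ ∃ x y : Fin 3 → ℝ, x ∈ P ∩ latticePts 3 ∧ y ∈ P ∩ latticePts 3 ∧
      x + y = ![1,1,1] := by
  intro P
  have hull_ineq : ∀ (f : (Fin 3 → ℝ) → ℝ), IsLinearMap ℝ f → ∀ c : ℝ,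
      f ![0,0,0] ≤ c → f ![1,0,0] ≤ c → f ![0,1,0] ≤ c → f ![1,1,2] ≤ c →
      ∀ p ∈ P, f p ≤ c := by
    intro f hf c h0 h1 h2 h3 p hp
    have : P ⊆ {q | f q ≤ c} := by
      apply convexHull_min _ (convex_halfSpace_le hf c)
      intro q hq
      simp only [Set.mem_insert_iff, Set.mem_singleton_iff] at hq
      rcases hq with rfl | rfl | rfl | rfl <;> assumption
    exact this hp
  rintro ⟨x, y, ⟨hxP, hxL⟩, ⟨hyP, hyL⟩, hsum⟩
  obtain ⟨a0, ha0⟩ := hxL 0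
  obtain ⟨a1, ha1⟩ := hxL 1
  obtain ⟨a2, ha2⟩ := hxL 2
  obtain ⟨b0, hb0⟩ := hyL 0
  obtain ⟨b1, hb1⟩ := hyL 1
  obtain ⟨b2, hb2⟩ := hyL 2
  have l1 : IsLinearMap ℝ (fun p : Fin 3 → ℝ => -p 2) := by
    constructor <;> intros <;> simp <;> ring
  have l2 : IsLinearMap ℝ (fun p : Fin 3 → ℝ => p 2 - 2 * p 0) := by
    constructor <;> intros <;> simp <;> ring
  have l3 : IsLinearMap ℝ (fun p : Fin 3 → ℝ => p 2 - 2 * p 1) := by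
    constructor <;> intros <;> simp <;> ring
  have l4 : IsLinearMap ℝ (fun p : Fin 3 → ℝ => 2 * p 0 + 2 * p 1 - p 2) := by
    constructor <;> intros <;> simp <;> ring
  have hx1 := hull_ineq _ l1 0 (by simp) (by simp) (by simp) (by simp) x hxP
  have hx2 := hull_ineq _ l2 0 (by simp) (by simp) (by simp) (by simp) x hxP
  have hx3 := hull_ineq _ l3 0 (by simp) (by simp) (by simp) (by simp) x hxP
  have hx4 := hull_ineq _ l4 2 (by simp) (by simp) (by simp) (by simp) x hxP
  have hy1 := hull_ineq _ l1 0 (by simp) (by simp) (by simp) (by simp) y hyP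
  have hy2 := hull_ineq _ l2 0 (by simp) (by simp) (by simp) (by simp) y hyP
  have hy3 := hull_ineq _ l3 0 (by simp) (by simp) (by simp) (by simp) y hyP
  have hy4 := hull_ineq _ l4 2 (by simp) (by simp) (by simp) (by simp) y hyP
  have s0 : x 0 + y 0 = 1 := by have := congrFun hsum 0; simpa using this
  have s1 : x 1 + y 1 = 1 := by have := congrFun hsum 1; simpa using this
  have s2 : x 2 + y 2 = 1 := by have := congrFun hsum 2; simpa using this
  simp only [ha0, ha1, ha2, hb0, hb1, hb2] at hx1 hx2 hx3 hx4 hy1 hy2 hy3 hy4 s0 s1 s2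
  have i1 : (0:ℤ) ≤ a2 := by exact_mod_cast neg_nonpos.mp hx1
  have i2 : (a2:ℤ) ≤ 2 * a0 := by exact_mod_cast sub_nonpos.mp hx2
  have i3 : (a2:ℤ) ≤ 2 * a1 := by exact_mod_cast sub_nonpos.mp hx3
  have i4 : 2 * a0 + 2 * a1 - a2 ≤ (2:ℤ) := by exact_mod_cast hx4
  have j1 : (0:ℤ) ≤ b2 := by exact_mod_cast neg_nonpos.mp hy1
  have j2 : (b2:ℤ) ≤ 2 * b0 := by exact_mod_cast sub_nonpos.mp hy2
  have j3 : (b2:ℤ) ≤ 2 * b1 := by exact_mod_cast sub_nonpos.mp hy3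
  have j4 : 2 * b0 + 2 * b1 - b2 ≤ (2:ℤ) := by exact_mod_cast hy4
  have e0 : a0 + b0 = (1:ℤ) := by exact_mod_cast s0
  have e1 : a1 + b1 = (1:ℤ) := by exact_mod_cast s1
  have e2 : a2 + b2 = (1:ℤ) := by exact_mod_cast s2
  omega
end

section
/- A lattice triangle in ℝ² is primitive (contains no lattice points other than its three vertices) if and only if its area is 1/2. -/
open MeasureTheory Pointwise

lemma mem_triangle_iff (a b c x : Fin 2 → ℝ) :
    x ∈ convexHull ℝ ({a, b, c} : Set (Fin 2 → ℝ)) ↔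
      ∃ s t : ℝ, 0 ≤ s ∧ 0 ≤ t ∧ s + t ≤ 1 ∧ x = a + s • (b - a) + t • (c - a) := by
  rw [show ({a, b, c} : Set (Fin 2 → ℝ)) = insert a {b, c} from rfl,
    convexHull_insert ⟨b, by simp⟩, convexHull_pair]
  simp only [mem_convexJoin, Set.mem_singleton_iff, segment_eq_image, Set.mem_image,
    Set.mem_Icc, exists_eq_left]
  constructor
  · rintro ⟨y, ⟨r, ⟨hr0, hr1⟩, rfl⟩, q, ⟨hq0, hq1⟩, rfl⟩
    refine ⟨q * (1 - r), q * r, mul_nonneg hq0 (by linarith), mul_nonneg hq0 hr0, by nlinarith, ?_⟩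
    module
  · rintro ⟨s, t, hs, ht, hst, rfl⟩
    rcases eq_or_lt_of_le (by linarith : (0:ℝ) ≤ s + t) with h0 | h0
    · refine ⟨b, ⟨0, by norm_num, by simp⟩, 0, by norm_num, ?_⟩
      have hs0 : s = 0 := by linarith
      have ht0 : t = 0 := by linarith
      rw [hs0, ht0]; module
    · refine ⟨(1 - t/(s+t)) • b + (t/(s+t)) • c, ⟨t/(s+t), ⟨by positivity, by
        rw [div_le_one h0]; linarith⟩, rfl⟩, s + t, ⟨by linarith, hst⟩, ?_⟩
      have h1 : (s+t) * (t / (s+t)) = t := by field_simp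
      have h2 : (s+t) * (1 - t/(s+t)) = s := by field_simp; ring
      match_scalars <;> nlinarith [h1, h2]

lemma exists_nonrep (u0 u1 v0 v1 : ℤ) (hd : 2 ≤ |u0 * v1 - u1 * v0|) :
    ∃ w0 w1 : ℤ, ∀ m n : ℤ, ¬ (w0 = m * u0 + n * v0 ∧ w1 = m * u1 + n * v1) := by
  by_contra h
  push_neg at h
  obtain ⟨m1, n1, h1, h2⟩ := h 1 0
  obtain ⟨m2, n2, h3, h4⟩ := h 0 1
  have hM : (Matrix.of ![![u0, v0], ![u1, v1]] * Matrix.of ![![m1, m2], ![n1, n2]]) = 1 := by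
    ext i j
    fin_cases i <;> fin_cases j <;>
      simp [Matrix.mul_apply, Fin.sum_univ_two, Matrix.one_apply] <;> linarith
  have hdet := congrArg Matrix.det hM
  rw [Matrix.det_mul, Matrix.det_one, Matrix.det_fin_two_of, Matrix.det_fin_two_of] at hdet
  have h5 : u0 * v1 - u1 * v0 ∣ 1 := ⟨m1 * n2 - m2 * n1, by linear_combination -hdet⟩
  rcases Int.isUnit_iff.mp (isUnit_of_dvd_one h5) with h | h <;> rw [h] at hd <;> simp at hd

lemma cramer_s (u0 u1 v0 v1 s t x0 x1 : ℝ) (h0 : x0 = s * u0 + t * v0)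
    (h1 : x1 = s * u1 + t * v1) :
    s * (u0 * v1 - u1 * v0) = x0 * v1 - x1 * v0 ∧
      t * (u0 * v1 - u1 * v0) = u0 * x1 - u1 * x0 :=
  ⟨by linear_combination -v1 * h0 + v0 * h1, by linear_combination -u0 * h1 + u1 * h0⟩

lemma collinear_of_det_eq_zero (a b c : Fin 2 → ℝ)
    (h : (b - a) 0 * (c - a) 1 - (b - a) 1 * (c - a) 0 = 0) :
    Collinear ℝ ({a, b, c} : Set (Fin 2 → ℝ)) := by
  rw [collinear_iff_of_mem (Set.mem_insert a {b, c})]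
  simp only [Pi.sub_apply] at h
  by_cases hu : b - a = 0
  · refine ⟨c - a, ?_⟩
    rintro p (rfl | rfl | rfl)
    · exact ⟨0, by simp⟩
    · exact ⟨0, by simpa [sub_eq_zero, eq_comm] using hu⟩
    · exact ⟨1, by rw [vadd_eq_add]; module⟩
  · have h01 : b 0 - a 0 ≠ 0 ∨ b 1 - a 1 ≠ 0 := by
      by_contra hh
      push_neg at hh
      exact hu (funext fun i => by fin_cases i <;> simp [hh.1, hh.2])
    refine ⟨b - a, fun p hp => ?_⟩
    rcases hp with rfl | rfl | rfl
    · exact ⟨0, by simp⟩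
    · exact ⟨1, by rw [vadd_eq_add]; module⟩
    · rcases h01 with h0 | h0
      · refine ⟨(p 0 - a 0) / (b 0 - a 0), funext fun i => ?_⟩
        rw [vadd_eq_add]
        fin_cases i <;>
          simp only [Pi.add_apply, Pi.smul_apply, Pi.sub_apply, smul_eq_mul,
            Fin.isValue, Fin.zero_eta, Fin.mk_one] <;> field_simp
        all_goals first
        | linear_combination h
        | linear_combination -h
        | linear_combination
      · refine ⟨(p 1 - a 1) / (b 1 - a 1), funext fun i => ?_⟩
        rw [vadd_eq_add]
        fin_cases i <;>
          simp only [Pi.add_apply, Pi.smul_apply, Pi.sub_apply, smul_eq_mul,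
            Fin.isValue, Fin.zero_eta, Fin.mk_one] <;> field_simp
        all_goals first
        | linear_combination h
        | linear_combination -h
        | linear_combination

lemma indep_aux (u0 u1 v0 v1 : ℝ) (hd : u0 * v1 - u1 * v0 ≠ 0) (α β : ℝ)
    (h0 : α * u0 + β * v0 = 0) (h1 : α * u1 + β * v1 = 0) : α = 0 ∧ β = 0 := by
  obtain ⟨hs, ht⟩ := cramer_s u0 u1 v0 v1 α β 0 0 h0.symm h1.symm
  have hs' : α * (u0 * v1 - u1 * v0) = 0 := by linarith
  have ht' : β * (u0 * v1 - u1 * v0) = 0 := by linarith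
  exact ⟨(mul_eq_zero.mp hs').resolve_right hd, (mul_eq_zero.mp ht').resolve_right hd⟩

/-- Inner lemma: a point with fractional barycentric-ish coordinates gives an extra
lattice point in the triangle. -/
lemma extra_point (a b c : Fin 2 → ℝ) (A : Fin 2 → ℤ) (hA : ∀ i, a i = A i)
    (hd0 : (b 0 - a 0) * (c 1 - a 1) - (b 1 - a 1) * (c 0 - a 0) ≠ 0)
    (σ τ : ℝ) (h1 : 0 ≤ σ) (h2 : 0 ≤ τ) (h3 : σ + τ ≤ 1) (h4 : σ < 1) (h5 : τ < 1)
    (h6 : ¬(σ = 0 ∧ τ = 0))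
    (h7 : ∃ Z : Fin 2 → ℤ, ∀ i, σ * (b i - a i) + τ * (c i - a i) = (Z i : ℝ)) :
    ∃ q, q ∈ convexHull ℝ ({a, b, c} : Set (Fin 2 → ℝ)) ∧ q ∈ latticePts 2 ∧
      q ∉ ({a, b, c} : Set (Fin 2 → ℝ)) := by
  obtain ⟨Z, hZ⟩ := h7
  refine ⟨a + σ • (b - a) + τ • (c - a),
    (mem_triangle_iff a b c _).mpr ⟨σ, τ, h1, h2, h3, rfl⟩, fun i => ⟨A i + Z i, by
      push_cast [← hZ i, ← hA i]; simp; ring⟩, ?_⟩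
  have key : ∀ s t : ℝ, a + σ • (b - a) + τ • (c - a) = a + s • (b - a) + t • (c - a) →
      σ = s ∧ τ = t := by
    intro s t hst
    have e0 := congrFun hst 0
    have e1 := congrFun hst 1
    simp only [Pi.add_apply, Pi.smul_apply, Pi.sub_apply, smul_eq_mul] at e0 e1
    obtain ⟨hα, hβ⟩ := indep_aux _ _ _ _ hd0 (σ - s) (τ - t) (by linarith) (by linarith)
    constructor <;> linarith
  rintro (hq | hq | hq)
  · obtain ⟨hσ, hτ⟩ := key 0 0 (by rw [hq]; module)
    exact h6 ⟨hσ, hτ⟩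
  · obtain ⟨hσ, hτ⟩ := key 1 0 (by rw [hq]; module)
    exact absurd hσ (by linarith)
  · obtain ⟨hσ, hτ⟩ := key 0 1 (by rw [hq]; module)
    exact absurd hτ (by linarith)

/-- If `|det| = 1` the triangle is primitive. -/
lemma primitive_of_unimodular (a b c : Fin 2 → ℝ) (A B C : Fin 2 → ℤ)
    (hA : ∀ i, a i = A i) (hB : ∀ i, b i = B i) (hC : ∀ i, c i = C i)
    (hd : ((B 0 - A 0) * (C 1 - A 1) - (B 1 - A 1) * (C 0 - A 0) = 1) ∨
      ((B 0 - A 0) * (C 1 - A 1) - (B 1 - A 1) * (C 0 - A 0) = -1)) :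
    convexHull ℝ ({a, b, c} : Set (Fin 2 → ℝ)) ∩ latticePts 2 = {a, b, c} := by
  set d : ℤ := (B 0 - A 0) * (C 1 - A 1) - (B 1 - A 1) * (C 0 - A 0) with hddef
  apply Set.Subset.antisymm
  · rintro x ⟨hxT, hxL⟩
    choose X hX using hxL
    obtain ⟨s, t, hs, ht, hst, hx⟩ := (mem_triangle_iff a b c x).mp hxT
    have e0 := congrFun hx 0
    have e1 := congrFun hx 1
    simp only [Pi.add_apply, Pi.smul_apply, Pi.sub_apply, smul_eq_mul] at e0 e1
    obtain ⟨hcs, hct⟩ := cramer_s (b 0 - a 0) (b 1 - a 1) (c 0 - a 0) (c 1 - a 1) s t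
      (x 0 - a 0) (x 1 - a 1) (by linarith) (by linarith)
    -- s * d = integer, |d| = 1
    have hdr : ((d : ℤ) : ℝ) = (b 0 - a 0) * (c 1 - a 1) - (b 1 - a 1) * (c 0 - a 0) := by
      push_cast [hddef, ← hA, ← hB, ← hC]; ring
    have hcs' : s * ((d : ℤ) : ℝ) =
        (((X 0 - A 0) * (C 1 - A 1) - (X 1 - A 1) * (C 0 - A 0) : ℤ) : ℝ) := by
      rw [hdr]; push_cast
      rw [← hX 0, ← hX 1, ← hA 0, ← hA 1, ← hC 0, ← hC 1]; exact hcs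
    have hct' : t * ((d : ℤ) : ℝ) =
        (((B 0 - A 0) * (X 1 - A 1) - (B 1 - A 1) * (X 0 - A 0) : ℤ) : ℝ) := by
      rw [hdr]; push_cast
      rw [← hX 0, ← hX 1, ← hA 0, ← hA 1, ← hB 0, ← hB 1]; exact hct
    have hd2 : ((d : ℤ) : ℝ) * ((d : ℤ) : ℝ) = 1 := by
      rcases hd with h | h <;> rw [h] <;> norm_num
    set K : ℤ := ((X 0 - A 0) * (C 1 - A 1) - (X 1 - A 1) * (C 0 - A 0)) * d with hK
    set L : ℤ := ((B 0 - A 0) * (X 1 - A 1) - (B 1 - A 1) * (X 0 - A 0)) * d with hL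
    have hsK : s = (K : ℝ) := by
      rw [hK]; push_cast
      calc s = s * ((d : ℤ) : ℝ) * ((d : ℤ) : ℝ) := by rw [mul_assoc, hd2, mul_one]
        _ = _ := by rw [hcs']; push_cast; ring
    have htL : t = (L : ℝ) := by
      rw [hL]; push_cast
      calc t = t * ((d : ℤ) : ℝ) * ((d : ℤ) : ℝ) := by rw [mul_assoc, hd2, mul_one]
        _ = _ := by rw [hct']; push_cast; ring
    have hK0 : (0 : ℤ) ≤ K := by rw [hsK] at hs; exact_mod_cast hs
    have hL0 : (0 : ℤ) ≤ L := by rw [htL] at ht; exact_mod_cast ht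
    have hKL : K + L ≤ 1 := by rw [hsK, htL] at hst; exact_mod_cast hst
    rw [hsK, htL] at hx
    have : (K = 0 ∧ L = 0) ∨ (K = 1 ∧ L = 0) ∨ (K = 0 ∧ L = 1) := by omega
    rcases this with ⟨hK1, hL1⟩ | ⟨hK1, hL1⟩ | ⟨hK1, hL1⟩ <;> rw [hK1, hL1] at hx
    · left; rw [hx]; push_cast; module
    · right; left; rw [hx]; push_cast; module
    · right; right; rw [hx]; push_cast; module
  · rintro x (rfl | rfl | rfl)
    · exact ⟨subset_convexHull ℝ _ (by simp), fun i => ⟨A i, hA i⟩⟩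
    · exact ⟨subset_convexHull ℝ _ (by simp), fun i => ⟨B i, hB i⟩⟩
    · exact ⟨subset_convexHull ℝ _ (by simp), fun i => ⟨C i, hC i⟩⟩

/-- If `|det| ≥ 2` the triangle contains an extra lattice point. -/
lemma not_primitive_of_big_det (a b c : Fin 2 → ℝ) (A B C : Fin 2 → ℤ)
    (hA : ∀ i, a i = A i) (hB : ∀ i, b i = B i) (hC : ∀ i, c i = C i)
    (hd2 : 2 ≤ |(B 0 - A 0) * (C 1 - A 1) - (B 1 - A 1) * (C 0 - A 0)|) :
    ∃ q, q ∈ convexHull ℝ ({a, b, c} : Set (Fin 2 → ℝ)) ∧ q ∈ latticePts 2 ∧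
      q ∉ ({a, b, c} : Set (Fin 2 → ℝ)) := by
  have hbr : ∀ i, b i - a i = ((B i - A i : ℤ) : ℝ) := fun i => by
    rw [hB i, hA i]; push_cast; ring
  have hcr : ∀ i, c i - a i = ((C i - A i : ℤ) : ℝ) := fun i => by
    rw [hC i, hA i]; push_cast; ring
  have hdz : (B 0 - A 0) * (C 1 - A 1) - (B 1 - A 1) * (C 0 - A 0) ≠ 0 := by
    intro h; rw [h] at hd2; simp at hd2
  have hdne : (((B 0 - A 0) * (C 1 - A 1) - (B 1 - A 1) * (C 0 - A 0) : ℤ) : ℝ) ≠ 0 := by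
    exact_mod_cast hdz
  have hdet0 : (b 0 - a 0) * (c 1 - a 1) - (b 1 - a 1) * (c 0 - a 0) =
      (((B 0 - A 0) * (C 1 - A 1) - (B 1 - A 1) * (C 0 - A 0) : ℤ) : ℝ) := by
    rw [hbr 0, hbr 1, hcr 0, hcr 1]; push_cast; ring
  obtain ⟨w0, w1, hw⟩ := exists_nonrep (B 0 - A 0) (B 1 - A 1) (C 0 - A 0) (C 1 - A 1) hd2
  set D : ℝ := (((B 0 - A 0) * (C 1 - A 1) - (B 1 - A 1) * (C 0 - A 0) : ℤ) : ℝ) with hD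
  set s : ℝ := ((w0 : ℝ) * ((C 1 - A 1 : ℤ) : ℝ) - (w1 : ℝ) * ((C 0 - A 0 : ℤ) : ℝ)) / D with hs
  set t : ℝ := (((B 0 - A 0 : ℤ) : ℝ) * (w1 : ℝ) - ((B 1 - A 1 : ℤ) : ℝ) * (w0 : ℝ)) / D with ht
  have hsol0 : s * ((B 0 - A 0 : ℤ) : ℝ) + t * ((C 0 - A 0 : ℤ) : ℝ) = (w0 : ℝ) := by
    rw [hs, ht, div_mul_eq_mul_div, div_mul_eq_mul_div, ← add_div, div_eq_iff hdne, hD]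
    push_cast
    ring
  have hsol1 : s * ((B 1 - A 1 : ℤ) : ℝ) + t * ((C 1 - A 1 : ℤ) : ℝ) = (w1 : ℝ) := by
    rw [hs, ht, div_mul_eq_mul_div, div_mul_eq_mul_div, ← add_div, div_eq_iff hdne, hD]
    push_cast
    ring
  clear hs ht
  clear_value s t
  push_cast at hsol0 hsol1
  have hfrac0 : Int.fract s * ((B 0 - A 0 : ℤ) : ℝ) + Int.fract t * ((C 0 - A 0 : ℤ) : ℝ) =
      ((w0 - ⌊s⌋ * (B 0 - A 0) - ⌊t⌋ * (C 0 - A 0) : ℤ) : ℝ) := by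
    simp only [Int.fract]
    push_cast
    linear_combination hsol0
  have hfrac1 : Int.fract s * ((B 1 - A 1 : ℤ) : ℝ) + Int.fract t * ((C 1 - A 1 : ℤ) : ℝ) =
      ((w1 - ⌊s⌋ * (B 1 - A 1) - ⌊t⌋ * (C 1 - A 1) : ℤ) : ℝ) := by
    simp only [Int.fract]
    push_cast
    linear_combination hsol1
  have h6 : ¬(Int.fract s = 0 ∧ Int.fract t = 0) := by
    rintro ⟨hs0, ht0⟩
    apply hw ⌊s⌋ ⌊t⌋
    rw [hs0, ht0] at hfrac0 hfrac1
    constructor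
    · have h' : ((w0 - ⌊s⌋ * (B 0 - A 0) - ⌊t⌋ * (C 0 - A 0) : ℤ) : ℝ) = 0 := by
        rw [← hfrac0]; ring
      have h'' : (w0 - ⌊s⌋ * (B 0 - A 0) - ⌊t⌋ * (C 0 - A 0) : ℤ) = 0 := by exact_mod_cast h'
      omega
    · have h' : ((w1 - ⌊s⌋ * (B 1 - A 1) - ⌊t⌋ * (C 1 - A 1) : ℤ) : ℝ) = 0 := by
        rw [← hfrac1]; ring
      have h'' : (w1 - ⌊s⌋ * (B 1 - A 1) - ⌊t⌋ * (C 1 - A 1) : ℤ) = 0 := by exact_mod_cast h'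
      omega
  have hσ0 : 0 ≤ Int.fract s := Int.fract_nonneg s
  have hτ0 : 0 ≤ Int.fract t := Int.fract_nonneg t
  have hσ1 : Int.fract s < 1 := Int.fract_lt_one s
  have hτ1 : Int.fract t < 1 := Int.fract_lt_one t
  rcases le_or_gt (Int.fract s + Int.fract t) 1 with hle | hgt
  · apply extra_point a b c A hA (by rw [hdet0, hD]; exact_mod_cast hdz) _ _ hσ0 hτ0 hle hσ1
      hτ1 h6
    refine ⟨![w0 - ⌊s⌋ * (B 0 - A 0) - ⌊t⌋ * (C 0 - A 0),
      w1 - ⌊s⌋ * (B 1 - A 1) - ⌊t⌋ * (C 1 - A 1)], fun i => ?_⟩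
    fin_cases i
    · show Int.fract s * (b 0 - a 0) + Int.fract t * (c 0 - a 0) =
        ((w0 - ⌊s⌋ * (B 0 - A 0) - ⌊t⌋ * (C 0 - A 0) : ℤ) : ℝ)
      rw [hbr 0, hcr 0]; exact hfrac0
    · show Int.fract s * (b 1 - a 1) + Int.fract t * (c 1 - a 1) =
        ((w1 - ⌊s⌋ * (B 1 - A 1) - ⌊t⌋ * (C 1 - A 1) : ℤ) : ℝ)
      rw [hbr 1, hcr 1]; exact hfrac1
  · apply extra_point a b c A hA (by rw [hdet0, hD]; exact_mod_cast hdz) (1 - Int.fract s)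
      (1 - Int.fract t) (by linarith) (by linarith) (by linarith) (by linarith) (by linarith)
      (by rintro ⟨h', h''⟩; linarith)
    refine ⟨![(B 0 - A 0) + (C 0 - A 0) - (w0 - ⌊s⌋ * (B 0 - A 0) - ⌊t⌋ * (C 0 - A 0)),
      (B 1 - A 1) + (C 1 - A 1) - (w1 - ⌊s⌋ * (B 1 - A 1) - ⌊t⌋ * (C 1 - A 1))], fun i => ?_⟩
    fin_cases i
    · show (1 - Int.fract s) * (b 0 - a 0) + (1 - Int.fract t) * (c 0 - a 0) =
        (((B 0 - A 0) + (C 0 - A 0) - (w0 - ⌊s⌋ * (B 0 - A 0) - ⌊t⌋ * (C 0 - A 0)) : ℤ) : ℝ)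
      rw [hbr 0, hcr 0]
      push_cast
      push_cast at hfrac0
      linear_combination -hfrac0
    · show (1 - Int.fract s) * (b 1 - a 1) + (1 - Int.fract t) * (c 1 - a 1) =
        (((B 1 - A 1) + (C 1 - A 1) - (w1 - ⌊s⌋ * (B 1 - A 1) - ⌊t⌋ * (C 1 - A 1)) : ℤ) : ℝ)
      rw [hbr 1, hcr 1]
      push_cast
      push_cast at hfrac1
      linear_combination -hfrac1

/-- The closed unit triangle in `ℝ × ℝ`. -/
lemma volume_unit_triangle_prod :
    volume {p : ℝ × ℝ | 0 ≤ p.1 ∧ 0 ≤ p.2 ∧ p.1 + p.2 ≤ 1} = ENNReal.ofReal (1 / 2) := by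
  have hmeas : MeasurableSet {p : ℝ × ℝ | 0 ≤ p.1 ∧ 0 ≤ p.2 ∧ p.1 + p.2 ≤ 1} :=
    (measurableSet_le measurable_const measurable_fst).inter
      ((measurableSet_le measurable_const measurable_snd).inter
        (measurableSet_le (measurable_fst.add measurable_snd) measurable_const))
  rw [show (volume : Measure (ℝ × ℝ)) = (volume : Measure ℝ).prod volume from rfl,
    Measure.prod_apply hmeas]
  have hfib : (fun x : ℝ => volume (Prod.mk x ⁻¹' {p : ℝ × ℝ | 0 ≤ p.1 ∧ 0 ≤ p.2 ∧ p.1 + p.2 ≤ 1}))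
      = (Set.Icc (0:ℝ) 1).indicator (fun x => ENNReal.ofReal (1 - x)) := by
    funext x
    by_cases hx : x ∈ Set.Icc (0:ℝ) 1
    · have : Prod.mk x ⁻¹' {p : ℝ × ℝ | 0 ≤ p.1 ∧ 0 ≤ p.2 ∧ p.1 + p.2 ≤ 1}
          = Set.Icc 0 (1 - x) := by
        ext y
        simp only [Set.mem_preimage, Set.mem_setOf_eq, Set.mem_Icc]
        constructor
        · rintro ⟨h1, h2, h3⟩; exact ⟨h2, by linarith⟩
        · rintro ⟨h1, h2⟩; exact ⟨hx.1, h1, by linarith⟩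
      rw [this, Real.volume_Icc, Set.indicator_of_mem hx]
      norm_num
    · have : Prod.mk x ⁻¹' {p : ℝ × ℝ | 0 ≤ p.1 ∧ 0 ≤ p.2 ∧ p.1 + p.2 ≤ 1} = ∅ := by
        ext y
        simp only [Set.mem_preimage, Set.mem_setOf_eq, Set.mem_empty_iff_false, iff_false]
        rintro ⟨h1, h2, h3⟩
        simp only [Set.mem_Icc] at hx
        push_neg at hx
        have := hx h1
        linarith
      rw [this, measure_empty, Set.indicator_of_notMem hx]
  rw [hfib, lintegral_indicator measurableSet_Icc]
  have hint : IntegrableOn (fun x : ℝ => 1 - x) (Set.Icc 0 1) volume :=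
    (continuous_const.sub continuous_id).integrableOn_Icc
  rw [← ofReal_integral_eq_lintegral_ofReal hint
    ((ae_restrict_iff' measurableSet_Icc).2 (Filter.Eventually.of_forall fun x hx => by
      simp only [Pi.zero_apply]
      have := (Set.mem_Icc.mp hx).2
      linarith))]
  congr 1
  rw [integral_Icc_eq_integral_Ioc, ← intervalIntegral.integral_of_le (by norm_num : (0:ℝ) ≤ 1)]
  rw [intervalIntegral.integral_sub intervalIntegrable_const
    intervalIntegral.intervalIntegrable_id, intervalIntegral.integral_const, integral_id]
  norm_num

/-- The closed unit triangle in `Fin 2 → ℝ`. -/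
lemma volume_unit_triangle :
    volume {x : Fin 2 → ℝ | 0 ≤ x 0 ∧ 0 ≤ x 1 ∧ x 0 + x 1 ≤ 1} = ENNReal.ofReal (1 / 2) := by
  have hmeas : MeasurableSet {p : ℝ × ℝ | 0 ≤ p.1 ∧ 0 ≤ p.2 ∧ p.1 + p.2 ≤ 1} :=
    (measurableSet_le measurable_const measurable_fst).inter
      ((measurableSet_le measurable_const measurable_snd).inter
        (measurableSet_le (measurable_fst.add measurable_snd) measurable_const))
  have hpre : {x : Fin 2 → ℝ | 0 ≤ x 0 ∧ 0 ≤ x 1 ∧ x 0 + x 1 ≤ 1}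
      = MeasurableEquiv.finTwoArrow ⁻¹' {p : ℝ × ℝ | 0 ≤ p.1 ∧ 0 ≤ p.2 ∧ p.1 + p.2 ≤ 1} := by
    ext x
    simp [MeasurableEquiv.finTwoArrow]
  rw [hpre, (volume_preserving_finTwoArrow ℝ).measure_preimage hmeas.nullMeasurableSet]
  exact volume_unit_triangle_prod

/-- The shear/linear map sending `e₀ ↦ u`, `e₁ ↦ v`. -/
def shearMap (u v : Fin 2 → ℝ) : (Fin 2 → ℝ) →ₗ[ℝ] (Fin 2 → ℝ) where
  toFun x := x 0 • u + x 1 • v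
  map_add' x y := by
    simp only [Pi.add_apply, add_smul]
    abel
  map_smul' r x := by
    simp only [Pi.smul_apply, smul_eq_mul, RingHom.id_apply, smul_add, mul_smul]

lemma shearMap_det (u v : Fin 2 → ℝ) :
    LinearMap.det (shearMap u v) = u 0 * v 1 - u 1 * v 0 := by
  rw [← LinearMap.det_toMatrix (Pi.basisFun ℝ (Fin 2))]
  rw [Matrix.det_fin_two]
  simp [LinearMap.toMatrix_apply, shearMap]
  ring

lemma volume_triangle (a b c : Fin 2 → ℝ) :
    volume (convexHull ℝ ({a, b, c} : Set (Fin 2 → ℝ))) =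
      ENNReal.ofReal (|(b - a) 0 * (c - a) 1 - (b - a) 1 * (c - a) 0| / 2) := by
  set u := b - a with hu
  set v := c - a with hv
  have himg : convexHull ℝ ({a, b, c} : Set (Fin 2 → ℝ))
      = (fun x => -a + x) ⁻¹' (shearMap u v '' {x : Fin 2 → ℝ | 0 ≤ x 0 ∧ 0 ≤ x 1 ∧ x 0 + x 1 ≤ 1}) := by
    ext x
    rw [mem_triangle_iff]
    simp only [Set.mem_preimage, Set.mem_image, Set.mem_setOf_eq]
    constructor
    · rintro ⟨s, t, hs, ht, hst, rfl⟩
      refine ⟨![s, t], ⟨by simpa using hs, by simpa using ht, by simpa using hst⟩, ?_⟩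
      show ((![s, t] : Fin 2 → ℝ) 0) • u + ((![s, t] : Fin 2 → ℝ) 1) • v = -a + (a + s • u + t • v)
      simp only [Matrix.cons_val_zero, Matrix.cons_val_one, Matrix.head_cons]
      abel
    · rintro ⟨y, ⟨h0, h1, h01⟩, hy⟩
      refine ⟨y 0, y 1, h0, h1, h01, ?_⟩
      have h : y 0 • u + y 1 • v = -a + x := hy
      rw [← hu, ← hv]
      calc x = a + (-a + x) := by abel
        _ = a + (y 0 • u + y 1 • v) := by rw [h]
        _ = a + y 0 • u + y 1 • v := by abel
  rw [himg, measure_preimage_add, Measure.addHaar_image_linearMap, shearMap_det, volume_unit_triangle,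
    ← ENNReal.ofReal_mul (abs_nonneg _)]
  congr 1
  rw [hu, hv]
  simp only [Pi.sub_apply]
  ring

theorem primitive_iff_area_half
    (a b c : Fin 2 → ℝ) (ha : a ∈ latticePts 2) (hb : b ∈ latticePts 2)
    (hc : c ∈ latticePts 2) (hncol : ¬ Collinear ℝ ({a, b, c} : Set (Fin 2 → ℝ)))
    (T : Set (Fin 2 → ℝ)) (hT : T = convexHull ℝ {a, b, c}) :
    T ∩ latticePts 2 = {a, b, c} ↔ volume T = ENNReal.ofReal (1 / 2) := by
  choose A hA using ha
  choose B hB using hb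
  choose C hC using hc
  have hcast : ((b - a) 0) * ((c - a) 1) - ((b - a) 1) * ((c - a) 0)
      = (((B 0 - A 0) * (C 1 - A 1) - (B 1 - A 1) * (C 0 - A 0) : ℤ) : ℝ) := by
    simp only [Pi.sub_apply, hA, hB, hC]
    push_cast
    ring
  have hdz : (B 0 - A 0) * (C 1 - A 1) - (B 1 - A 1) * (C 0 - A 0) ≠ 0 := by
    intro h
    apply hncol
    apply collinear_of_det_eq_zero
    rw [hcast, h]
    norm_num
  have hvol : volume T = ENNReal.ofReal
      (|(((B 0 - A 0) * (C 1 - A 1) - (B 1 - A 1) * (C 0 - A 0) : ℤ) : ℝ)| / 2) := by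
    rw [hT, volume_triangle, hcast]
  subst hT
  constructor
  · intro hprim
    have habs : (B 0 - A 0) * (C 1 - A 1) - (B 1 - A 1) * (C 0 - A 0) = 1 ∨
        (B 0 - A 0) * (C 1 - A 1) - (B 1 - A 1) * (C 0 - A 0) = -1 := by
      by_contra hcon
      push_neg at hcon
      have h2 : 2 ≤ |(B 0 - A 0) * (C 1 - A 1) - (B 1 - A 1) * (C 0 - A 0)| := by
        rcases lt_trichotomy ((B 0 - A 0) * (C 1 - A 1) - (B 1 - A 1) * (C 0 - A 0)) 0 with
          h | h | h
        · rw [abs_of_neg h]; omega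
        · exact absurd h hdz
        · rw [abs_of_pos h]; omega
      obtain ⟨q, hq1, hq2, hq3⟩ := not_primitive_of_big_det a b c A B C hA hB hC h2
      exact hq3 (hprim ▸ (⟨hq1, hq2⟩ : q ∈ convexHull ℝ ({a, b, c} : Set (Fin 2 → ℝ)) ∩
        latticePts 2))
    rw [hvol]
    congr 1
    rcases habs with h | h <;> rw [h] <;> norm_num
  · intro hv
    have heq := hvol.symm.trans hv
    rw [ENNReal.ofReal_eq_ofReal_iff (by positivity) (by norm_num)] at heq
    have habsR : |(((B 0 - A 0) * (C 1 - A 1) - (B 1 - A 1) * (C 0 - A 0) : ℤ) : ℝ)| = 1 := by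
      linarith
    have habsZ : |(B 0 - A 0) * (C 1 - A 1) - (B 1 - A 1) * (C 0 - A 0)| = 1 := by
      have h' : ((|(B 0 - A 0) * (C 1 - A 1) - (B 1 - A 1) * (C 0 - A 0)| : ℤ) : ℝ) = 1 := by
        rw [Int.cast_abs]
        exact habsR
      exact_mod_cast h'
    exact primitive_of_unimodular a b c A B C hA hB hC
      ((abs_eq (by norm_num)).mp habsZ)
end

section
/- Let P be a lattice polygon in ℝ² and h a positive integer. If w is a lattice point in the h-fold sumset hP, then there exist lattice points a, b, c ∈ P ∩ ℤ² and nonnegative integers i, j, k with i + j + k = h such that w = i·a + j·b + k·c. -/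
open MeasureTheory Pointwise

namespace LP

def cst (v : Fin 2 → ℤ) : Fin 2 → ℝ := fun i => (v i : ℝ)

lemma cst_inj {u v : Fin 2 → ℤ} (h : cst u = cst v) : u = v := by
  funext i
  have := congrFun h i
  simpa [cst] using this

def rdet (u v : Fin 2 → ℝ) : ℝ := u 0 * v 1 - u 1 * v 0
def idet (u v : Fin 2 → ℤ) : ℤ := u 0 * v 1 - u 1 * v 0

lemma idet_cast (u v : Fin 2 → ℤ) : ((idet u v : ℤ) : ℝ) = rdet (cst u) (cst v) := by
  simp [idet, rdet, cst]

lemma cst_sub (u v : Fin 2 → ℤ) : cst (u - v) = cst u - cst v := by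
  funext i; simp [cst]

lemma cst_add (u v : Fin 2 → ℤ) : cst (u + v) = cst u + cst v := by
  funext i; simp [cst]

lemma cst_zsmul (m : ℤ) (v : Fin 2 → ℤ) : cst (m • v) = (m : ℝ) • cst v := by
  funext i; simp [cst]

lemma cramer (u b c : Fin 2 → ℝ) (hD : rdet b c ≠ 0) :
    u = (rdet u c / rdet b c) • b + (rdet b u / rdet b c) • c := by
  funext i
  have h2 : i = 0 ∨ i = 1 := by omega
  rcases h2 with rfl | rfl <;>
  · simp only [Pi.add_apply, Pi.smul_apply, smul_eq_mul]
    rw [div_mul_eq_mul_div, div_mul_eq_mul_div, ← add_div, eq_comm, div_eq_iff hD]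
    simp only [rdet]
    ring

lemma solve2 (b c u : Fin 2 → ℝ) (s t : ℝ) (h : u = s • b + t • c) :
    s * rdet b c = rdet u c ∧ t * rdet b c = rdet b u := by
  subst h
  constructor <;> · simp only [rdet, Pi.add_apply, Pi.smul_apply, smul_eq_mul]; ring

lemma rdet_sub (a b c q : Fin 2 → ℝ) (μ1 μ2 μ3 : ℝ) (hs : μ1 + μ2 + μ3 = 1)
    (hq : q = μ1 • a + μ2 • b + μ3 • c) :
    rdet (b - q) (c - q) = μ1 * rdet (b - a) (c - a) ∧
    rdet (q - a) (c - a) = μ2 * rdet (b - a) (c - a) ∧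
    rdet (b - a) (q - a) = μ3 * rdet (b - a) (c - a) := by
  subst hq
  have h1 : μ1 = 1 - μ2 - μ3 := by linarith
  subst h1
  refine ⟨?_, ?_, ?_⟩ <;>
  · simp only [rdet, Pi.sub_apply, Pi.add_apply, Pi.smul_apply, smul_eq_mul]
    ring


lemma pick3 (μ lam : Fin 3 → ℝ) (hμ : ∀ i, 0 ≤ μ i) (hl : ∀ i, 0 ≤ lam i)
    (hs : 0 < ∑ i, μ i) : ∃ i, 0 < μ i ∧ ∀ j, lam i * μ j ≤ lam j * μ i := by
  classical
  have hne : (Finset.univ.filter fun i => 0 < μ i).Nonempty := by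
    by_contra hcon
    rw [Finset.not_nonempty_iff_eq_empty] at hcon
    have : ∀ i, μ i = 0 := by
      intro i
      by_contra hi
      have h' : 0 < μ i := lt_of_le_of_ne (hμ i) (Ne.symm hi)
      have : i ∈ Finset.univ.filter fun i => 0 < μ i := by simp [h']
      simp [hcon] at this
    simp [this] at hs
  obtain ⟨i, hi, hmin⟩ := Finset.exists_min_image _ (fun i => lam i / μ i) hne
  rw [Finset.mem_filter] at hi
  refine ⟨i, hi.2, fun j => ?_⟩
  by_cases hj : 0 < μ j
  · have := hmin j (by simp [hj])
    rwa [div_le_div_iff₀ hi.2 hj] at this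
  · have : μ j = 0 := le_antisymm (not_lt.mp hj) (hμ j)
    rw [this]
    have := mul_nonneg (hl j) (le_of_lt hi.2)
    nlinarith [hl i]

lemma pick3' (μ1 μ2 μ3 l1 l2 l3 : ℝ) (hμ1 : 0 ≤ μ1) (hμ2 : 0 ≤ μ2) (hμ3 : 0 ≤ μ3)
    (hl1 : 0 ≤ l1) (hl2 : 0 ≤ l2) (hl3 : 0 ≤ l3) (hs : 0 < μ1 + μ2 + μ3) :
    (0 < μ1 ∧ l1 * μ2 ≤ l2 * μ1 ∧ l1 * μ3 ≤ l3 * μ1) ∨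
    (0 < μ2 ∧ l2 * μ1 ≤ l1 * μ2 ∧ l2 * μ3 ≤ l3 * μ2) ∨
    (0 < μ3 ∧ l3 * μ1 ≤ l1 * μ3 ∧ l3 * μ2 ≤ l2 * μ3) := by
  obtain ⟨i, hi, hcr⟩ := pick3 ![μ1, μ2, μ3] ![l1, l2, l3]
    (fun i => by fin_cases i <;> assumption)
    (fun i => by fin_cases i <;> assumption)
    (by rw [Fin.sum_univ_three]; simpa using hs)
  have hc0 := hcr 0
  have hc1 := hcr 1
  have hc2 := hcr 2
  fin_cases i <;>
    simp only [Matrix.cons_val_zero, Matrix.cons_val_one, Matrix.head_cons,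
      Matrix.cons_val_two, Matrix.tail_cons] at hi hc0 hc1 hc2
  · exact Or.inl ⟨hi, hc1, hc2⟩
  · exact Or.inr (Or.inl ⟨hi, hc0, hc2⟩)
  · exact Or.inr (Or.inr ⟨hi, hc0, hc1⟩)

lemma combo_mem {P : Set (Fin 2 → ℝ)} (hconv : Convex ℝ P) {a b c : Fin 2 → ℝ}
    (ha : a ∈ P) (hb : b ∈ P) (hc : c ∈ P) {μ1 μ2 μ3 : ℝ}
    (h1 : 0 ≤ μ1) (h2 : 0 ≤ μ2) (h3 : 0 ≤ μ3) (hs : μ1 + μ2 + μ3 = 1) :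
    μ1 • a + μ2 • b + μ3 • c ∈ P := by
  have := hconv.sum_mem (t := (Finset.univ : Finset (Fin 3))) (w := ![μ1, μ2, μ3])
    (z := ![a, b, c]) ?_ ?_ ?_
  · simpa [Fin.sum_univ_three] using this
  · intro i _; fin_cases i <;> simpa
  · simp [Fin.sum_univ_three, hs]
  · intro i _; fin_cases i <;> simpa


lemma cst_lattice (v : Fin 2 → ℤ) : cst v ∈ latticePts 2 := fun i => ⟨v i, rfl⟩

def Goal (P : Set (Fin 2 → ℝ)) (h : ℕ) (w : Fin 2 → ℝ) : Prop :=
  ∃ a b c : Fin 2 → ℝ, a ∈ P ∩ latticePts 2 ∧ b ∈ P ∩ latticePts 2 ∧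
    c ∈ P ∩ latticePts 2 ∧ ∃ i j k : ℕ, i + j + k = h ∧
      w = (i : ℝ) • a + (j : ℝ) • b + (k : ℝ) • c

lemma goal_mk {P : Set (Fin 2 → ℝ)} {h : ℕ} {w : Fin 2 → ℝ} (A B C : Fin 2 → ℤ)
    (hA : cst A ∈ P) (hB : cst B ∈ P) (hC : cst C ∈ P) (i j k : ℕ)
    (hsum : i + j + k = h)
    (hw : w = (i : ℝ) • cst A + (j : ℝ) • cst B + (k : ℝ) • cst C) : Goal P h w :=
  ⟨cst A, cst B, cst C, ⟨hA, cst_lattice A⟩, ⟨hB, cst_lattice B⟩, ⟨hC, cst_lattice C⟩,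
    i, j, k, hsum, hw⟩

lemma segment_case (P : Set (Fin 2 → ℝ)) (hconv : Convex ℝ P) (h : ℕ) (hh : 0 < h)
    (W A B : Fin 2 → ℤ) (hA : cst A ∈ P) (hB : cst B ∈ P) (t : ℝ) (ht0 : 0 ≤ t)
    (ht1 : t ≤ h) (hw : cst W = ((h : ℝ) - t) • cst A + t • cst B) : Goal P h (cst W) := by
  classical
  by_cases hBA : B = A
  · subst hBA
    refine goal_mk B B B hA hA hA h 0 0 (by omega) ?_
    rw [hw]
    push_cast
    module
  · set d : Fin 2 → ℤ := B - A with hd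
    have hd0 : ¬(d 0 = 0 ∧ d 1 = 0) := by
      rintro ⟨h0, h1⟩
      apply hBA
      have : d = 0 := by
        funext i
        have h2 : i = 0 ∨ i = 1 := by omega
        rcases h2 with rfl | rfl <;> assumption
      have := sub_eq_zero.mp (by rw [← hd]; exact this)
      exact this
    set g : ℕ := Int.gcd (d 0) (d 1) with hg
    have hgpos : 0 < g := by
      rcases Nat.eq_zero_or_pos g with h0 | h0
      · exact absurd (Int.gcd_eq_zero_iff.mp h0) hd0
      · exact h0
    set u : Fin 2 → ℤ := fun i => d i / (g : ℤ) with hu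
    have hdvd : ∀ i : Fin 2, (g : ℤ) ∣ d i := by
      intro i
      have h2 : i = 0 ∨ i = 1 := by omega
      rcases h2 with rfl | rfl
      · exact Int.gcd_dvd_left _ _
      · exact Int.gcd_dvd_right _ _
    have hdu : ∀ i : Fin 2, d i = (g : ℤ) * u i := fun i =>
      (Int.mul_ediv_cancel' (hdvd i)).symm
    have hugcd : Int.gcd (u 0) (u 1) = 1 := by
      exact Int.gcd_div_gcd_div_gcd hgpos
    -- real coordinates: W i = h * A i + t * d i
    have hcoord : ∀ i : Fin 2, (W i : ℝ) = h * A i + t * (g : ℝ) * (u i : ℝ) := by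
      intro i
      have := congrFun hw i
      simp only [cst, Pi.add_apply, Pi.smul_apply, smul_eq_mul] at this
      rw [this]
      have hdi : (d i : ℝ) = (g : ℝ) * (u i : ℝ) := by exact_mod_cast hdu i
      have hBi : (B i : ℝ) = (A i : ℝ) + (d i : ℝ) := by
        have : d i = B i - A i := by simp [hd]
        rw [this]; push_cast; ring
      rw [hBi, hdi]; ring
    set x : ℤ := Int.gcdA (u 0) (u 1) with hx
    set y : ℤ := Int.gcdB (u 0) (u 1) with hy
    have hbez : u 0 * x + u 1 * y = 1 := by
      have := Int.gcd_eq_gcd_ab (u 0) (u 1)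
      rw [hugcd] at this
      exact_mod_cast this.symm
    set e : ℤ := (W 0 - h * A 0) * x + (W 1 - h * A 1) * y with he
    have hereal : (e : ℝ) = t * g := by
      have h0 := hcoord 0
      have h1 := hcoord 1
      have : (e : ℝ) = ((W 0 : ℝ) - h * A 0) * x + ((W 1 : ℝ) - h * A 1) * y := by
        rw [he]; push_cast; ring
      rw [this]
      rw [h0, h1]
      have : t * (g:ℝ) * (u 0 : ℝ) * x + t * (g:ℝ) * (u 1:ℝ) * y
          = t * g * ((u 0 : ℝ) * x + (u 1 : ℝ) * y) := by ring
      have hbr : ((u 0 : ℝ)) * x + (u 1 : ℝ) * y = 1 := by exact_mod_cast hbez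
      calc ((h:ℝ) * A 0 + t * g * u 0 - h * A 0) * x + ((h:ℝ) * A 1 + t * g * u 1 - h * A 1) * y
          = t * g * ((u 0 : ℝ) * x + (u 1 : ℝ) * y) := by ring
        _ = t * g := by rw [hbr]; ring
    have he0 : 0 ≤ e := by
      have : (0:ℝ) ≤ (e:ℝ) := by rw [hereal]; positivity
      exact_mod_cast this
    have hehg : e ≤ (h : ℤ) * g := by
      have : (e : ℝ) ≤ (h : ℝ) * g := by
        rw [hereal]
        have : (0:ℝ) ≤ (g:ℝ) := by positivity
        nlinarith
      exact_mod_cast this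
    -- cst W = h • cst A + e • cst u
    have hwu : ∀ i : Fin 2, (W i : ℝ) = h * A i + (e : ℝ) * u i := by
      intro i
      rw [hcoord i, hereal]
    set α : ℤ := e / (h : ℤ) with hα
    set ρ : ℤ := e % (h : ℤ) with hρ
    have hhz : (0:ℤ) < (h:ℤ) := by exact_mod_cast hh
    have hdm : (h:ℤ) * α + ρ = e := Int.mul_ediv_add_emod e (h:ℤ)
    have hρ0 : 0 ≤ ρ := Int.emod_nonneg e (by omega)
    have hρh : ρ < (h:ℤ) := Int.emod_lt_of_pos e hhz
    have hα0 : 0 ≤ α := Int.ediv_nonneg he0 (by omega)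
    by_cases hαg : (g:ℤ) ≤ α
    · -- e = h * g, W = h • B
      have hehg' : e = (h:ℤ) * g := by nlinarith
      refine goal_mk B B B hB hB hB h 0 0 (by omega) ?_
      funext i
      simp only [Pi.add_apply, Pi.smul_apply, smul_eq_mul, cst]
      have hBi : (B i : ℝ) = (A i : ℝ) + (g:ℝ) * u i := by
        have : B i = A i + d i := by simp [hd]
        rw [this, hdu i]; push_cast; ring
      rw [hwu i, hBi]
      have : (e : ℝ) = (h : ℝ) * g := by exact_mod_cast hehg'
      rw [this]
      push_cast
      ring
    · push_neg at hαg
      set A' : Fin 2 → ℤ := A + α • u with hA'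
      set B' : Fin 2 → ℤ := A + (α + 1) • u with hB'
      have hmemP : ∀ β : ℤ, 0 ≤ β → β ≤ g → cst (A + β • u) ∈ P := by
        intro β hβ0 hβg
        have hcomb : cst (A + β • u) = (1 - (β:ℝ)/g) • cst A + ((β:ℝ)/g) • cst B := by
          funext i
          simp only [cst, Pi.add_apply, Pi.smul_apply, smul_eq_mul]
          have hBi : (B i : ℝ) = (A i : ℝ) + (g:ℝ) * u i := by
            have : B i = A i + d i := by simp [hd]
            rw [this, hdu i]; push_cast; ring
          rw [hBi]
          have hgne : (g:ℝ) ≠ 0 := by positivity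
          push_cast
          field_simp
          ring
        rw [hcomb]
        have hb0 : (0:ℝ) ≤ (β:ℝ)/g := by positivity
        have hb1 : (β:ℝ)/g ≤ 1 := by
          rw [div_le_one (by positivity)]
          exact_mod_cast hβg
        exact hconv hA hB (by linarith) hb0 (by ring)
      have hA'P : cst A' ∈ P := hmemP α hα0 (by omega)
      have hB'P : cst B' ∈ P := hmemP (α + 1) (by omega) (by omega)
      set j : ℕ := ρ.toNat with hj
      have hjh : j < h := by
        have : (j : ℤ) = ρ := Int.toNat_of_nonneg hρ0
        omega
      refine goal_mk A' B' B' hA'P hB'P hB'P (h - j) j 0 (by omega) ?_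
      funext i
      simp only [Pi.add_apply, Pi.smul_apply, smul_eq_mul, cst]
      have hAi' : ((A' i : ℤ) : ℝ) = (A i : ℝ) + (α : ℝ) * u i := by
        simp only [hA', Pi.add_apply, Pi.smul_apply, smul_eq_mul]; push_cast; ring
      have hBi' : ((B' i : ℤ) : ℝ) = (A i : ℝ) + ((α : ℝ) + 1) * u i := by
        simp only [hB', Pi.add_apply, Pi.smul_apply, smul_eq_mul]; push_cast; ring
      rw [hwu i, hAi', hBi']
      have hjr : (j : ℝ) = (ρ : ℝ) := by
        have : (j : ℤ) = ρ := Int.toNat_of_nonneg hρ0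
        exact_mod_cast this
      have hhj : ((h - j : ℕ) : ℝ) = (h : ℝ) - (ρ : ℝ) := by
        have : ((h - j : ℕ) : ℝ) = (h : ℝ) - (j : ℝ) := by
          have : j ≤ h := le_of_lt hjh
          push_cast [this]
          ring
        rw [this, hjr]
      rw [hhj, hjr]
      have her : (e : ℝ) = (h:ℝ) * (α:ℝ) + (ρ:ℝ) := by exact_mod_cast hdm.symm
      rw [her]
      ring

lemma degenerate_case (P : Set (Fin 2 → ℝ)) (hconv : Convex ℝ P) (h : ℕ) (hh : 0 < h)
    (W A B C : Fin 2 → ℤ) (hA : cst A ∈ P) (hB : cst B ∈ P) (hC : cst C ∈ P)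
    (hdet : idet (B - A) (C - A) = 0) (l1 l2 l3 : ℝ) (h1 : 0 ≤ l1) (h2 : 0 ≤ l2)
    (h3 : 0 ≤ l3) (hsum : l1 + l2 + l3 = h)
    (hw : cst W = l1 • cst A + l2 • cst B + l3 • cst C) : Goal P h (cst W) := by
  have hl1 : l1 = (h : ℝ) - l2 - l3 := by linarith
  rw [hl1] at hw
  by_cases hBA : cst B = cst A
  · -- use segment A C with t = l3
    rw [hBA] at hw
    refine segment_case P hconv h hh W A C hA hC l3 h3 (by linarith) ?_
    rw [hw]; module
  · -- b - a ≠ 0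
    set a := cst A
    set b := cst B
    set c := cst C
    have hrdet : rdet (b - a) (c - a) = 0 := by
      rw [← cst_sub, ← cst_sub, ← idet_cast, hdet]; simp
    have hba : b - a ≠ 0 := sub_ne_zero.mpr hBA
    have hcoord : (b - a) 0 ≠ 0 ∨ (b - a) 1 ≠ 0 := by
      by_contra hcon
      push_neg at hcon
      apply hba
      funext i
      have h2i : i = 0 ∨ i = 1 := by omega
      rcases h2i with rfl | rfl <;> simp [hcon.1, hcon.2]
    obtain ⟨r, hr⟩ : ∃ r : ℝ, c - a = r • (b - a) := by
      rcases hcoord with h0 | h0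
      · refine ⟨(c - a) 0 / (b - a) 0, ?_⟩
        funext i
        have h2i : i = 0 ∨ i = 1 := by omega
        rcases h2i with rfl | rfl
        · simp only [Pi.smul_apply, smul_eq_mul]
          rw [div_mul_eq_mul_div, mul_div_assoc, div_self h0, mul_one]
        · simp only [Pi.smul_apply, smul_eq_mul]
          rw [div_mul_eq_mul_div, eq_div_iff h0]
          simp only [rdet] at hrdet
          linarith
      · refine ⟨(c - a) 1 / (b - a) 1, ?_⟩
        funext i
        have h2i : i = 0 ∨ i = 1 := by omega
        rcases h2i with rfl | rfl
        · simp only [Pi.smul_apply, smul_eq_mul]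
          rw [div_mul_eq_mul_div, eq_div_iff h0]
          simp only [rdet] at hrdet
          linarith
        · simp only [Pi.smul_apply, smul_eq_mul]
          rw [div_mul_eq_mul_div, mul_div_assoc, div_self h0, mul_one]
    have hc : c = a + r • (b - a) := by
      rw [← hr]; module
    rw [hc] at hw
    -- now w = (h - t) • a + t • b with t = l2 + l3 * r
    obtain ⟨t, ht⟩ : ∃ t : ℝ, t = l2 + l3 * r := ⟨_, rfl⟩
    have hw2 : cst W = ((h:ℝ) - t) • a + t • b := by
      rw [hw, ht]; module
    rcases le_or_gt r 1 with hr1 | hr1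
    · rcases le_or_gt 0 r with hr0 | hr0
      · -- 0 ≤ r ≤ 1 : segment A B
        refine segment_case P hconv h hh W A B hA hB t ?_ ?_ hw2
        · have : 0 ≤ l3 * r := mul_nonneg h3 hr0
          linarith
        · nlinarith
      · -- r < 0 : segment C B
        obtain ⟨s, hs⟩ : ∃ s : ℝ, s = (t - (h:ℝ) * r) / (1 - r) := ⟨_, rfl⟩
        have h1r : (0:ℝ) < 1 - r := by linarith
        refine segment_case P hconv h hh W C B hC hB s ?_ ?_ ?_
        · rw [hs]
          apply div_nonneg _ (le_of_lt h1r)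
          nlinarith
        · rw [hs, div_le_iff₀ h1r]
          nlinarith
        · rw [hw2, show cst C = c from rfl, show cst B = b from rfl, hc]
          have hseq : s * (1 - r) = t - (h:ℝ) * r := by
            rw [hs]; field_simp
          match_scalars <;> linarith [hseq, mul_comm r s]
    · -- r > 1 : segment A C
      obtain ⟨s, hs⟩ : ∃ s : ℝ, s = t / r := ⟨_, rfl⟩
      have hrpos : (0:ℝ) < r := by linarith
      have ht0 : 0 ≤ t := by nlinarith
      refine segment_case P hconv h hh W A C hA hC s ?_ ?_ ?_
      · rw [hs]; positivity
      · rw [hs, div_le_iff₀ hrpos]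
        nlinarith
      · rw [hw2, show cst A = a from rfl, show cst C = c from rfl, hc]
        have hseq : s * r = t := by rw [hs]; field_simp
        match_scalars <;> linarith [hseq, mul_comm r s]


lemma idet_lin (X Y : Fin 2 → ℤ) (m1 m2 m1' m2' : ℤ) :
    idet (m1 • X + m2 • Y) (m1' • X + m2' • Y) = (m1 * m2' - m2 * m1') * idet X Y := by
  simp only [idet, Pi.add_apply, Pi.smul_apply, smul_eq_mul]
  ring


set_option maxHeartbeats 2000000 in
lemma key (P : Set (Fin 2 → ℝ)) (hconv : Convex ℝ P) (h : ℕ) (hh : 0 < h)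
    (W : Fin 2 → ℤ) : ∀ n : ℕ, ∀ A B C : Fin 2 → ℤ,
    (idet (B - A) (C - A)).natAbs = n →
    cst A ∈ P → cst B ∈ P → cst C ∈ P →
    (∃ l1 l2 l3 : ℝ, 0 ≤ l1 ∧ 0 ≤ l2 ∧ 0 ≤ l3 ∧ l1 + l2 + l3 = h ∧
      cst W = l1 • cst A + l2 • cst B + l3 • cst C) → Goal P h (cst W) := by
  intro n
  induction n using Nat.strong_induction_on with
  | _ n IH =>
  rintro A B C hnat hA hB hC ⟨l1, l2, l3, h1, h2, h3, hsum, hw⟩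
  rcases Nat.eq_zero_or_pos n with hn0 | hnpos
  · subst hn0
    have : idet (B - A) (C - A) = 0 := Int.natAbs_eq_zero.mp hnat
    exact degenerate_case P hconv h hh W A B C hA hB hC this l1 l2 l3 h1 h2 h3 hsum hw
  obtain ⟨D, hD⟩ : ∃ D : ℤ, D = idet (B - A) (C - A) := ⟨_, rfl⟩
  rw [← hD] at hnat
  have hD0 : D ≠ 0 := fun hc0 => by simp [hc0] at hnat; omega
  have hDr : ((D : ℤ) : ℝ) = rdet (cst B - cst A) (cst C - cst A) := by
    rw [hD, idet_cast, cst_sub, cst_sub]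
  have hDr0 : rdet (cst B - cst A) (cst C - cst A) ≠ 0 := by
    rw [← hDr]
    exact_mod_cast hD0
  have hl1 : l1 = (h : ℝ) - l2 - l3 := by linarith
  obtain ⟨M, hM⟩ : ∃ M : Fin 2 → ℤ, M = W - (h : ℤ) • A := ⟨_, rfl⟩
  have hMr : cst M = cst W - (h : ℝ) • cst A := by
    funext i
    simp only [hM, cst, Pi.sub_apply, Pi.smul_apply, smul_eq_mul]
    push_cast
    ring
  have hu : cst M = l2 • (cst B - cst A) + l3 • (cst C - cst A) := by
    rw [hMr, hw, hl1]
    module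
  obtain ⟨N2, hN2⟩ : ∃ N2 : ℤ, N2 = idet M (C - A) := ⟨_, rfl⟩
  obtain ⟨N3, hN3⟩ : ∃ N3 : ℤ, N3 = idet (B - A) M := ⟨_, rfl⟩
  have hN2r : (N2 : ℝ) = rdet (cst M) (cst C - cst A) := by
    rw [hN2, idet_cast, cst_sub]
  have hN3r : (N3 : ℝ) = rdet (cst B - cst A) (cst M) := by
    rw [hN3, idet_cast, cst_sub]
  obtain ⟨hs2, hs3⟩ := solve2 (cst B - cst A) (cst C - cst A) (cst M) l2 l3 hu
  have hl2D : l2 * (D : ℝ) = (N2 : ℝ) := by rw [hN2r, ← hs2, hDr]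
  have hl3D : l3 * (D : ℝ) = (N3 : ℝ) := by rw [hN3r, ← hs3, hDr]
  rcases Nat.lt_or_ge n 2 with hn1 | hn2
  · -- n = 1 : unimodular
    have hD1 : D = 1 ∨ D = -1 := by omega
    obtain ⟨e2, he2⟩ : ∃ e2 : ℤ, e2 = N2 * D := ⟨_, rfl⟩
    obtain ⟨e3, he3⟩ : ∃ e3 : ℤ, e3 = N3 * D := ⟨_, rfl⟩
    have hl2e : l2 = (e2 : ℝ) := by
      rcases hD1 with hd | hd <;> rw [hd] at hl2D <;> rw [he2, hd] <;>
        push_cast at hl2D ⊢ <;> linarith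
    have hl3e : l3 = (e3 : ℝ) := by
      rcases hD1 with hd | hd <;> rw [hd] at hl3D <;> rw [he3, hd] <;>
        push_cast at hl3D ⊢ <;> linarith
    obtain ⟨e1, he1⟩ : ∃ e1 : ℤ, e1 = (h : ℤ) - e2 - e3 := ⟨_, rfl⟩
    have hl1e : l1 = (e1 : ℝ) := by rw [he1]; push_cast; rw [← hl2e, ← hl3e]; linarith
    have he1n : 0 ≤ e1 := by
      have : (0:ℝ) ≤ (e1:ℝ) := by rw [← hl1e]; exact h1
      exact_mod_cast this
    have he2n : 0 ≤ e2 := by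
      have : (0:ℝ) ≤ (e2:ℝ) := by rw [← hl2e]; exact h2
      exact_mod_cast this
    have he3n : 0 ≤ e3 := by
      have : (0:ℝ) ≤ (e3:ℝ) := by rw [← hl3e]; exact h3
      exact_mod_cast this
    refine goal_mk A B C hA hB hC e1.toNat e2.toNat e3.toNat ?_ ?_
    · omega
    · rw [hw, hl1e, hl2e, hl3e]
      have c1 : ((e1.toNat : ℕ) : ℝ) = (e1 : ℝ) := by
        exact_mod_cast congrArg (Int.cast : ℤ → ℝ) (Int.toNat_of_nonneg he1n)
      have c2 : ((e2.toNat : ℕ) : ℝ) = (e2 : ℝ) := by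
        exact_mod_cast congrArg (Int.cast : ℤ → ℝ) (Int.toNat_of_nonneg he2n)
      have c3 : ((e3.toNat : ℕ) : ℝ) = (e3 : ℝ) := by
        exact_mod_cast congrArg (Int.cast : ℤ → ℝ) (Int.toNat_of_nonneg he3n)
      rw [c1, c2, c3]
  · -- descent
    have hV : ∃ V : Fin 2 → ℤ, ∀ m1 m2 : ℤ, V ≠ A + m1 • (B - A) + m2 • (C - A) := by
      by_contra hcon
      push_neg at hcon
      obtain ⟨p1, p2, hp⟩ := hcon (A + ![1, 0])
      obtain ⟨q1, q2, hq⟩ := hcon (A + ![0, 1])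
      have hp' : (![1, 0] : Fin 2 → ℤ) = p1 • (B - A) + p2 • (C - A) := by
        rw [add_assoc] at hp
        exact add_left_cancel hp
      have hq' : (![0, 1] : Fin 2 → ℤ) = q1 • (B - A) + q2 • (C - A) := by
        rw [add_assoc] at hq
        exact add_left_cancel hq
      have h1i : idet ![1, 0] ![0, 1] = 1 := by simp [idet]
      rw [hp', hq', idet_lin, ← hD] at h1i
      have hdvd : D ∣ 1 := Dvd.intro_left _ h1i
      rcases Int.isUnit_iff.mp (isUnit_of_dvd_one hdvd) with hd | hd <;>
        rw [hd] at hnat <;> simp at hnat <;> omega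
    obtain ⟨V, hVnot⟩ := hV
    obtain ⟨Q2, hQ2⟩ : ∃ Q2 : ℤ, Q2 = idet (V - A) (C - A) := ⟨_, rfl⟩
    obtain ⟨Q3, hQ3⟩ : ∃ Q3 : ℤ, Q3 = idet (B - A) (V - A) := ⟨_, rfl⟩
    have hQ2r : (Q2 : ℝ) = rdet (cst V - cst A) (cst C - cst A) := by
      rw [hQ2, idet_cast, cst_sub, cst_sub]
    have hQ3r : (Q3 : ℝ) = rdet (cst B - cst A) (cst V - cst A) := by
      rw [hQ3, idet_cast, cst_sub, cst_sub]
    have hVdec : cst V - cst A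
        = ((Q2 : ℝ) / D) • (cst B - cst A) + ((Q3 : ℝ) / D) • (cst C - cst A) := by
      have := cramer (cst V - cst A) (cst B - cst A) (cst C - cst A) hDr0
      rw [← hQ2r, ← hQ3r, ← hDr] at this
      exact this
    obtain ⟨m2, hm2⟩ : ∃ m2 : ℤ, m2 = ⌊(Q2 : ℝ) / D⌋ := ⟨_, rfl⟩
    obtain ⟨m3, hm3⟩ : ∃ m3 : ℤ, m3 = ⌊(Q3 : ℝ) / D⌋ := ⟨_, rfl⟩
    obtain ⟨σ, hσ⟩ : ∃ σ : ℝ, σ = Int.fract ((Q2 : ℝ) / D) := ⟨_, rfl⟩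
    obtain ⟨τ, hτ⟩ : ∃ τ : ℝ, τ = Int.fract ((Q3 : ℝ) / D) := ⟨_, rfl⟩
    have hσ0 : 0 ≤ σ := hσ ▸ Int.fract_nonneg _
    have hσ1 : σ < 1 := hσ ▸ Int.fract_lt_one _
    have hτ0 : 0 ≤ τ := hτ ▸ Int.fract_nonneg _
    have hτ1 : τ < 1 := hτ ▸ Int.fract_lt_one _
    have hfr2 : (Q2 : ℝ) / D = (m2 : ℝ) + σ := by
      rw [hσ, hm2, Int.fract]
      ring
    have hfr3 : (Q3 : ℝ) / D = (m3 : ℝ) + τ := by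
      rw [hτ, hm3, Int.fract]
      ring
    obtain ⟨q, hq⟩ : ∃ q : Fin 2 → ℤ, q = V - m2 • (B - A) - m3 • (C - A) := ⟨_, rfl⟩
    have hqcast : cst q = cst V - (m2 : ℝ) • (cst B - cst A) - (m3 : ℝ) • (cst C - cst A) := by
      funext i
      simp only [hq, cst, Pi.sub_apply, Pi.smul_apply, Pi.add_apply, smul_eq_mul]
      push_cast
      ring
    have hqr : cst q = cst A + σ • (cst B - cst A) + τ • (cst C - cst A) := by
      rw [hqcast]
      have h1v : cst V - cst A = ((m2 : ℝ) + σ) • (cst B - cst A)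
          + ((m3 : ℝ) + τ) • (cst C - cst A) := by
        rw [hVdec, hfr2, hfr3]
      have h2v := eq_add_of_sub_eq h1v
      rw [h2v]
      module
    have hne00 : ¬(σ = 0 ∧ τ = 0) := by
      rintro ⟨hs0, ht0⟩
      apply hVnot m2 m3
      have : cst q = cst A := by rw [hqr, hs0, ht0]; module
      have hqA : q = A := cst_inj this
      rw [hq, sub_sub] at hqA
      have h2 := eq_add_of_sub_eq hqA
      rw [← add_assoc] at h2
      exact h2
    have hst0 : 0 < σ + τ := by
      rcases lt_or_eq_of_le hσ0 with hs | hs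
      · linarith
      rcases lt_or_eq_of_le hτ0 with ht | ht
      · linarith
      · exact absurd ⟨hs.symm, ht.symm⟩ hne00
    -- choose q' with coefficients in [0,1), sum in (0,1]
    obtain ⟨q', σ', τ', hσ'0, hσ'1, hτ'0, hτ'1, hst'0, hst'1, hq'r⟩ :
        ∃ (q' : Fin 2 → ℤ) (σ' τ' : ℝ), 0 ≤ σ' ∧ σ' < 1 ∧ 0 ≤ τ' ∧ τ' < 1 ∧
          0 < σ' + τ' ∧ σ' + τ' ≤ 1 ∧
          cst q' = cst A + σ' • (cst B - cst A) + τ' • (cst C - cst A) := by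
      rcases le_or_gt (σ + τ) 1 with hle | hgt
      · exact ⟨q, σ, τ, hσ0, hσ1, hτ0, hτ1, hst0, hle, hqr⟩
      · refine ⟨B + C - q, 1 - σ, 1 - τ, by linarith, by nlinarith, by linarith, by nlinarith,
          by linarith, by linarith, ?_⟩
        have hcastsum : cst (B + C - q) = cst B + cst C - cst q := by
          funext i
          simp [cst, Pi.add_apply, Pi.sub_apply]
        rw [hcastsum, hqr]
        module
    obtain ⟨μ1, hμ1⟩ : ∃ μ1 : ℝ, μ1 = 1 - σ' - τ' := ⟨_, rfl⟩
    have hμ1r : 0 ≤ μ1 ∧ μ1 < 1 := by constructor <;> rw [hμ1] <;> linarith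
    have hq'comb : cst q' = μ1 • cst A + σ' • cst B + τ' • cst C := by
      rw [hq'r, hμ1]
      module
    have hq'P : cst q' ∈ P := by
      rw [hq'comb]
      exact combo_mem hconv hA hB hC hμ1r.1 hσ'0 hτ'0 (by rw [hμ1]; ring)
    -- determinants of the three replacement triangles
    obtain ⟨hd1, hd2, hd3⟩ := rdet_sub (cst A) (cst B) (cst C) (cst q') μ1 σ' τ'
      (by rw [hμ1]; ring) hq'comb
    have habs : ∀ (E : ℤ) (μ : ℝ), 0 ≤ μ → μ < 1 → (E : ℝ) = μ * (D : ℝ) →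
        E.natAbs < n := by
      intro E μ hμ0 hμlt hE
      have h1' : |(E : ℝ)| < |(D : ℝ)| := by
        rw [hE, abs_mul]
        have hDa : 0 < |(D : ℝ)| := by
          rw [abs_pos]
          exact_mod_cast hD0
        have : |μ| = μ := abs_of_nonneg hμ0
        rw [this]
        nlinarith
      have hEc : ((E.natAbs : ℕ) : ℝ) = |(E : ℝ)| := by
        rw [Nat.cast_natAbs]
        exact Int.cast_abs
      have hDc : ((D.natAbs : ℕ) : ℝ) = |(D : ℝ)| := by
        rw [Nat.cast_natAbs]
        exact Int.cast_abs
      have hlt : E.natAbs < D.natAbs := by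
        rw [← hEc, ← hDc] at h1'
        exact_mod_cast h1'
      omega
    -- pick the vertex to replace
    rcases pick3' μ1 σ' τ' l1 l2 l3 hμ1r.1 hσ'0 hτ'0 h1 h2 h3 (by linarith) with
      ⟨hp, hcx, hcy⟩ | ⟨hp, hcx, hcy⟩ | ⟨hp, hcx, hcy⟩
    · -- replace A by q' : triple (q', B, C)
      obtain ⟨θ, hθ⟩ : ∃ θ : ℝ, θ = l1 / μ1 := ⟨_, rfl⟩
      have hθ0 : 0 ≤ θ := by rw [hθ]; positivity
      have hθμ : θ * μ1 = l1 := by rw [hθ]; field_simp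
      have hE : ((idet (B - q') (C - q') : ℤ) : ℝ) = μ1 * (D : ℝ) := by
        rw [idet_cast, cst_sub, cst_sub, hd1, ← hDr]
      refine IH (idet (B - q') (C - q')).natAbs
        (habs _ μ1 hμ1r.1 hμ1r.2 hE) q' B C rfl hq'P hB hC
        ⟨θ, l2 - θ * σ', l3 - θ * τ', hθ0, ?_, ?_, ?_, ?_⟩
      · rw [hθ, div_mul_eq_mul_div, sub_nonneg, div_le_iff₀ hp]
        linarith
      · rw [hθ, div_mul_eq_mul_div, sub_nonneg, div_le_iff₀ hp]
        linarith
      · have hexp : θ - θ * σ' - θ * τ' = l1 := by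
          rw [hμ1] at hθμ
          linear_combination hθμ
        linarith
      · rw [hw, hq'comb]
        match_scalars
        · linear_combination - hθμ
        · ring
        · ring
    · -- replace B by q' : triple (A, q', C)
      obtain ⟨θ, hθ⟩ : ∃ θ : ℝ, θ = l2 / σ' := ⟨_, rfl⟩
      have hθ0 : 0 ≤ θ := by rw [hθ]; positivity
      have hθμ : θ * σ' = l2 := by rw [hθ]; field_simp
      have hE : ((idet (q' - A) (C - A) : ℤ) : ℝ) = σ' * (D : ℝ) := by
        rw [idet_cast, cst_sub, cst_sub, hd2, ← hDr]
      refine IH (idet (q' - A) (C - A)).natAbs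
        (habs _ σ' hσ'0 hσ'1 hE) A q' C rfl hA hq'P hC
        ⟨l1 - θ * μ1, θ, l3 - θ * τ', ?_, hθ0, ?_, ?_, ?_⟩
      · rw [hθ, div_mul_eq_mul_div, sub_nonneg, div_le_iff₀ hp]
        linarith
      · rw [hθ, div_mul_eq_mul_div, sub_nonneg, div_le_iff₀ hp]
        linarith
      · have hexp : θ - θ * μ1 - θ * τ' = l2 := by
          rw [hμ1]
          linear_combination hθμ
        linarith
      · rw [hw, hq'comb]
        match_scalars
        · ring
        · linear_combination - hθμ
        · ring
    · -- replace C by q' : triple (A, B, q')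
      obtain ⟨θ, hθ⟩ : ∃ θ : ℝ, θ = l3 / τ' := ⟨_, rfl⟩
      have hθ0 : 0 ≤ θ := by rw [hθ]; positivity
      have hθμ : θ * τ' = l3 := by rw [hθ]; field_simp
      have hE : ((idet (B - A) (q' - A) : ℤ) : ℝ) = τ' * (D : ℝ) := by
        rw [idet_cast, cst_sub, cst_sub, hd3, ← hDr]
      refine IH (idet (B - A) (q' - A)).natAbs
        (habs _ τ' hτ'0 hτ'1 hE) A B q' rfl hA hB hq'P
        ⟨l1 - θ * μ1, l2 - θ * σ', θ, ?_, ?_, hθ0, ?_, ?_⟩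
      · rw [hθ, div_mul_eq_mul_div, sub_nonneg, div_le_iff₀ hp]
        linarith
      · rw [hθ, div_mul_eq_mul_div, sub_nonneg, div_le_iff₀ hp]
        linarith
      · have hexp : θ - θ * μ1 - θ * σ' = l3 := by
          rw [hμ1]
          linear_combination hθμ
        linarith
      · rw [hw, hq'comb]
        match_scalars
        · ring
        · ring
        · linear_combination - hθμ

lemma latt_pre {p : Fin 2 → ℝ} (hp : p ∈ latticePts 2) : ∃ A : Fin 2 → ℤ, cst A = p :=
  ⟨fun i => (hp i).choose, funext fun i => ((hp i).choose_spec).symm⟩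


end LP

theorem lattice_point_in_sumset_rep (P : Set (Fin 2 → ℝ))
    (hP : IsLatticePolytope 2 P) (h : ℕ) (hh : 0 < h)
    (w : Fin 2 → ℝ) (hw : w ∈ sumset 2 h P) (hwl : w ∈ latticePts 2) :
    ∃ a b c : Fin 2 → ℝ, a ∈ P ∩ latticePts 2 ∧ b ∈ P ∩ latticePts 2 ∧
      c ∈ P ∩ latticePts 2 ∧ ∃ i j k : ℕ, i + j + k = h ∧
        w = (i : ℝ) • a + (j : ℝ) • b + (k : ℝ) • c := by
  classical
  obtain ⟨S, hSne, hSlat, hSP⟩ := hP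
  have hconv : Convex ℝ P := by rw [hSP]; exact convex_convexHull ℝ _
  have hSsubP : (S : Set (Fin 2 → ℝ)) ⊆ P := by
    rw [hSP]; exact subset_convexHull ℝ _
  obtain ⟨W, hcw⟩ := LP.latt_pre hwl
  obtain ⟨f, hf, hfsum⟩ := hw
  have hhr : (0:ℝ) < (h:ℝ) := by exact_mod_cast hh
  set x : Fin 2 → ℝ := (h:ℝ)⁻¹ • w with hx
  have hxP : x ∈ P := by
    rw [hx, hfsum, Finset.smul_sum]
    refine hconv.sum_mem (fun i _ => by positivity) ?_ (fun i _ => hf i)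
    simp [Finset.sum_const, Finset.card_univ]
    field_simp
  have hwx : w = (h:ℝ) • x := by
    rw [hx, smul_inv_smul₀ (ne_of_gt hhr)]
  have hxS : x ∈ convexHull ℝ (S : Set (Fin 2 → ℝ)) := by rwa [hSP] at hxP
  obtain ⟨ι, hfin, z, wt, hrange, hai, hpos, hsum1, hsumx⟩ :=
    eq_pos_convex_span_of_mem_convexHull hxS
  letI := hfin
  have hcard3 : Fintype.card ι ≤ 3 := by
    have h1 := hai.card_le_finrank_succ
    have h2 : Module.finrank ℝ (vectorSpan ℝ (Set.range z)) ≤ Module.finrank ℝ (Fin 2 → ℝ) :=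
      Submodule.finrank_le _
    have h3 : Module.finrank ℝ (Fin 2 → ℝ) = 2 := Module.finrank_fin_fun ℝ
    omega
  have hcard1 : 0 < Fintype.card ι := by
    rcases Nat.eq_zero_or_pos (Fintype.card ι) with h0 | h0
    · exfalso
      haveI : IsEmpty ι := Fintype.card_eq_zero_iff.mp h0
      rw [Finset.univ_eq_empty, Finset.sum_empty] at hsum1
      norm_num at hsum1
    · exact h0
  obtain ⟨m, hm⟩ : ∃ m : ℕ, Fintype.card ι = m := ⟨_, rfl⟩
  obtain ⟨e⟩ : Nonempty (ι ≃ Fin m) := ⟨(Fintype.equivFin ι).trans (finCongr hm)⟩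
  set z' : Fin m → Fin 2 → ℝ := z ∘ e.symm with hz'
  set wt' : Fin m → ℝ := wt ∘ e.symm with hwt'
  have hsum1' : ∑ i, wt' i = 1 := by
    rw [hwt', ← hsum1]
    exact Equiv.sum_comp e.symm wt
  have hsumx' : ∑ i, wt' i • z' i = x := by
    rw [hwt', hz', ← hsumx]
    exact Equiv.sum_comp e.symm (fun i => wt i • z i)
  have hzS : ∀ i : Fin m, z' i ∈ P ∧ z' i ∈ latticePts 2 := by
    intro i
    have : z' i ∈ (S : Set (Fin 2 → ℝ)) := hrange ⟨e.symm i, rfl⟩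
    exact ⟨hSsubP this, hSlat this⟩
  have hpos' : ∀ i : Fin m, 0 < wt' i := fun i => hpos _
  have hm3 : m = 1 ∨ m = 2 ∨ m = 3 := by omega
  have key' : ∀ A B C : Fin 2 → ℤ, LP.cst A ∈ P → LP.cst B ∈ P → LP.cst C ∈ P →
      (∃ l1 l2 l3 : ℝ, 0 ≤ l1 ∧ 0 ≤ l2 ∧ 0 ≤ l3 ∧ l1 + l2 + l3 = h ∧
        LP.cst W = l1 • LP.cst A + l2 • LP.cst B + l3 • LP.cst C) →
      LP.Goal P h (LP.cst W) :=
    fun A B C hA hB hC hex => LP.key P hconv h hh W _ A B C rfl hA hB hC hex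
  have hGoal : LP.Goal P h w := by
    rw [← hcw]
    rcases hm3 with rfl | rfl | rfl
    · -- one point
      obtain ⟨A, hA⟩ := LP.latt_pre (hzS 0).2
      refine key' A A A (hA ▸ (hzS 0).1) (hA ▸ (hzS 0).1) (hA ▸ (hzS 0).1)
        ⟨h, 0, 0, by positivity, le_refl 0, le_refl 0, by ring, ?_⟩
      rw [hcw, hwx, ← hsumx', Fin.sum_univ_one, hA]
      rw [Fin.sum_univ_one] at hsum1'
      rw [hsum1']
      module
    · -- two points
      obtain ⟨A, hA⟩ := LP.latt_pre (hzS 0).2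
      obtain ⟨B, hB⟩ := LP.latt_pre (hzS 1).2
      refine key' A B B (hA ▸ (hzS 0).1) (hB ▸ (hzS 1).1) (hB ▸ (hzS 1).1)
        ⟨(h:ℝ) * wt' 0, (h:ℝ) * wt' 1, 0,
          le_of_lt (mul_pos hhr (hpos' 0)), le_of_lt (mul_pos hhr (hpos' 1)),
          le_refl 0, ?_, ?_⟩
      · rw [Fin.sum_univ_two] at hsum1'
        nlinarith [hsum1']
      · rw [hcw, hwx, ← hsumx', Fin.sum_univ_two, hA, hB]
        module
    · -- three points
      obtain ⟨A, hA⟩ := LP.latt_pre (hzS 0).2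
      obtain ⟨B, hB⟩ := LP.latt_pre (hzS 1).2
      obtain ⟨C, hC⟩ := LP.latt_pre (hzS 2).2
      refine key' A B C (hA ▸ (hzS 0).1) (hB ▸ (hzS 1).1) (hC ▸ (hzS 2).1)
        ⟨(h:ℝ) * wt' 0, (h:ℝ) * wt' 1, (h:ℝ) * wt' 2,
          le_of_lt (mul_pos hhr (hpos' 0)), le_of_lt (mul_pos hhr (hpos' 1)),
          le_of_lt (mul_pos hhr (hpos' 2)), ?_, ?_⟩
      · rw [Fin.sum_univ_three] at hsum1'
        nlinarith [hsum1']
      · rw [hcw, hwx, ← hsumx', Fin.sum_univ_three, hA, hB, hC]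
        module
  exact hGoal
end

section
/- For every lattice polygon P in ℝ² and every positive integer h, h(P ∩ ℤ²) = (hP) ∩ ℤ²; that is, every lattice point of the h-fold sumset hP is a sum of h lattice points of P. -/
open MeasureTheory Pointwise

/-- 2x2 determinant of two vectors in `ℝ²`. -/
def det2 (a b : Fin 2 → ℝ) : ℝ := a 0 * b 1 - a 1 * b 0

lemma lat_zero : (0 : Fin 2 → ℝ) ∈ latticePts 2 := fun _ => ⟨0, by simp⟩

lemma lat_add {a b : Fin 2 → ℝ} (ha : a ∈ latticePts 2) (hb : b ∈ latticePts 2) :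
    a + b ∈ latticePts 2 := by
  intro i
  obtain ⟨z1, hz1⟩ := ha i
  obtain ⟨z2, hz2⟩ := hb i
  exact ⟨z1 + z2, by simp [hz1, hz2]⟩

lemma lat_sub {a b : Fin 2 → ℝ} (ha : a ∈ latticePts 2) (hb : b ∈ latticePts 2) :
    a - b ∈ latticePts 2 := by
  intro i
  obtain ⟨z1, hz1⟩ := ha i
  obtain ⟨z2, hz2⟩ := hb i
  exact ⟨z1 - z2, by simp [hz1, hz2]⟩

lemma lat_nsmul {a : Fin 2 → ℝ} (ha : a ∈ latticePts 2) (c : ℕ) :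
    (c : ℝ) • a ∈ latticePts 2 := by
  intro i
  obtain ⟨z, hz⟩ := ha i
  exact ⟨c * z, by simp [Pi.smul_apply, hz]⟩

lemma lat_sum {ι : Type*} (t : Finset ι) (f : ι → Fin 2 → ℝ)
    (hf : ∀ i ∈ t, f i ∈ latticePts 2) : (∑ i ∈ t, f i) ∈ latticePts 2 := by
  classical
  induction t using Finset.induction_on with
  | empty => simpa using lat_zero
  | insert _ _ hnot ih =>
    rw [Finset.sum_insert hnot]
    exact lat_add (hf _ (Finset.mem_insert_self _ _))
      (ih fun i hi => hf i (Finset.mem_insert_of_mem hi))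

lemma det2_int {a b : Fin 2 → ℝ} (ha : a ∈ latticePts 2) (hb : b ∈ latticePts 2) :
    ∃ z : ℤ, det2 a b = (z : ℝ) := by
  obtain ⟨a0, ha0⟩ := ha 0
  obtain ⟨a1, ha1⟩ := ha 1
  obtain ⟨b0, hb0⟩ := hb 0
  obtain ⟨b1, hb1⟩ := hb 1
  exact ⟨a0 * b1 - a1 * b0, by simp [det2, ha0, ha1, hb0, hb1]⟩

/-- membership in the convex hull of three explicit points. -/
lemma mem_hull3 {a b c p : Fin 2 → ℝ} {α β γ : ℝ} (h0 : 0 ≤ α) (h1 : 0 ≤ β) (h2 : 0 ≤ γ)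
    (hs : α + β + γ = 1) (hp : p = α • a + β • b + γ • c) :
    p ∈ convexHull ℝ ({a, b, c} : Set (Fin 2 → ℝ)) := by
  have := (convex_convexHull ℝ ({a, b, c} : Set (Fin 2 → ℝ))).sum_mem
    (t := (Finset.univ : Finset (Fin 3))) (w := ![α, β, γ]) (z := ![a, b, c])
    (fun i _ => by fin_cases i <;> simpa)
    (by simp [Fin.sum_univ_three, hs])
    (fun i _ => by
      fin_cases i <;> apply subset_convexHull <;> simp)
  simpa [Fin.sum_univ_three, ← hp] using this

lemma rep_add {X : Set (Fin 2 → ℝ)} {h1 h2 : ℕ} {y1 y2 : Fin 2 → ℝ}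
    (H1 : y1 ∈ sumset 2 h1 X) (H2 : y2 ∈ sumset 2 h2 X) :
    y1 + y2 ∈ sumset 2 (h1 + h2) X := by
  obtain ⟨f, hf, rfl⟩ := H1
  obtain ⟨g, hg, rfl⟩ := H2
  refine ⟨Fin.append f g, fun i => ?_, ?_⟩
  · refine Fin.addCases (fun i => ?_) (fun i => ?_) i <;> simp [hf, hg]
  · rw [Fin.sum_univ_add]
    simp

lemma rep_zero {X : Set (Fin 2 → ℝ)} : (0 : Fin 2 → ℝ) ∈ sumset 2 0 X :=
  ⟨Fin.elim0, fun i => i.elim0, by simp⟩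

lemma rep_one {X : Set (Fin 2 → ℝ)} {a : Fin 2 → ℝ} (ha : a ∈ X) : a ∈ sumset 2 1 X :=
  ⟨fun _ => a, fun _ => ha, by simp⟩

lemma rep_two {X : Set (Fin 2 → ℝ)} {a b : Fin 2 → ℝ} (ha : a ∈ X) (hb : b ∈ X) :
    a + b ∈ sumset 2 2 X :=
  ⟨![a, b], fun i => by fin_cases i <;> simpa, by simp [Fin.sum_univ_two]⟩

lemma rep_nsmul {X : Set (Fin 2 → ℝ)} {a : Fin 2 → ℝ} (ha : a ∈ X) (k : ℕ) :
    (k : ℝ) • a ∈ sumset 2 k X :=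
  ⟨fun _ => a, fun _ => ha, by simp [Finset.sum_const, Nat.cast_smul_eq_nsmul ℝ]⟩

lemma rep_sum {X : Set (Fin 2 → ℝ)} {ι : Type*} (t : Finset ι) (g : ι → ℕ)
    (p : ι → Fin 2 → ℝ) (hp : ∀ i ∈ t, p i ∈ X) :
    (∑ i ∈ t, (g i : ℝ) • p i) ∈ sumset 2 (∑ i ∈ t, g i) X := by
  classical
  induction t using Finset.induction_on with
  | empty => simpa using rep_zero
  | insert _ _ hnot ih =>
    rw [Finset.sum_insert hnot, Finset.sum_insert hnot]
    exact rep_add (rep_nsmul (hp _ (Finset.mem_insert_self _ _)) _)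
      (ih fun i hi => hp i (Finset.mem_insert_of_mem hi))

/-- `r` is a sum of two lattice points of the convex hull of `T`. -/
def Good (T : Set (Fin 2 → ℝ)) (r : Fin 2 → ℝ) : Prop :=
  ∃ a b : Fin 2 → ℝ, a ∈ convexHull ℝ T ∧ a ∈ latticePts 2 ∧
    b ∈ convexHull ℝ T ∧ b ∈ latticePts 2 ∧ r = a + b

lemma det2_perm1 (u0 u1 u2 : Fin 2 → ℝ) :
    det2 (u0 - u1) (u2 - u1) = - det2 (u1 - u0) (u2 - u0) := by
  simp only [det2, Pi.sub_apply]; ring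

lemma det2_perm2 (u0 u1 u2 : Fin 2 → ℝ) :
    det2 (u0 - u2) (u1 - u2) = det2 (u1 - u0) (u2 - u0) := by
  simp only [det2, Pi.sub_apply]; ring

lemma set_perm1 (u0 u1 u2 : Fin 2 → ℝ) : ({u1, u0, u2} : Set (Fin 2 → ℝ)) = {u0, u1, u2} :=
  Set.insert_comm _ _ _

lemma set_perm2 (u0 u1 u2 : Fin 2 → ℝ) : ({u2, u0, u1} : Set (Fin 2 → ℝ)) = {u0, u1, u2} :=
  (Set.insert_comm u2 u0 {u1}).trans (congrArg (insert u0) (Set.pair_comm u2 u1))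

/-- Peeling off a vertex with barycentric coefficient at least one. -/
lemma peel {u0 u1 u2 r : Fin 2 → ℝ} {μ0 μ1 μ2 : ℝ}
    (hu0 : u0 ∈ latticePts 2) (hrl : r ∈ latticePts 2)
    (h0 : 1 ≤ μ0) (h1 : 0 ≤ μ1) (h2 : 0 ≤ μ2) (hs : μ0 + μ1 + μ2 = 2)
    (hr : r = μ0 • u0 + μ1 • u1 + μ2 • u2) :
    Good {u0, u1, u2} r := by
  refine ⟨u0, r - u0, subset_convexHull ℝ _ (by simp), hu0, ?_, lat_sub hrl hu0, by abel⟩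
  exact mem_hull3 (α := μ0 - 1) (β := μ1) (γ := μ2) (by linarith) h1 h2 (by linarith)
    (by rw [hr]; module)

def CoreP (n : ℕ) : Prop :=
  ∀ u0 u1 u2 r : Fin 2 → ℝ, ∀ μ0 μ1 μ2 : ℝ,
    u0 ∈ latticePts 2 → u1 ∈ latticePts 2 → u2 ∈ latticePts 2 → r ∈ latticePts 2 →
    0 ≤ μ0 → 0 ≤ μ1 → 0 ≤ μ2 → μ0 + μ1 + μ2 = 2 →
    r = μ0 • u0 + μ1 • u1 + μ2 • u2 →
    det2 (u1 - u0) (u2 - u0) ≠ 0 → |det2 (u1 - u0) (u2 - u0)| ≤ (n : ℝ) →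
    Good {u0, u1, u2} r

/-- The inductive step in the case where all barycentric coefficients are in `(0,1)`
and the minimum of `μ i / (1 - μ i)` is attained at the first vertex. -/
lemma coreB {n : ℕ} (IH : CoreP n) (u0 u1 u2 r : Fin 2 → ℝ) (μ0 μ1 μ2 : ℝ)
    (hu0 : u0 ∈ latticePts 2) (hu1 : u1 ∈ latticePts 2) (hu2 : u2 ∈ latticePts 2)
    (hrl : r ∈ latticePts 2)
    (h0l : 0 < μ0) (h0u : μ0 < 1) (h1l : 0 ≤ μ1) (h1u : μ1 < 1) (h2l : 0 ≤ μ2) (h2u : μ2 < 1)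
    (hs : μ0 + μ1 + μ2 = 2) (hr : r = μ0 • u0 + μ1 • u1 + μ2 • u2)
    (hmin1 : μ0 * (1 - μ1) ≤ μ1 * (1 - μ0)) (hmin2 : μ0 * (1 - μ2) ≤ μ2 * (1 - μ0))
    (hD : det2 (u1 - u0) (u2 - u0) ≠ 0) (hDle : |det2 (u1 - u0) (u2 - u0)| ≤ (n : ℝ) + 1) :
    Good {u0, u1, u2} r := by
  have hg0 : 0 < 1 - μ0 := by linarith
  set w : Fin 2 → ℝ := u0 + u1 + u2 - r with hwdef
  have hwlat : w ∈ latticePts 2 := lat_sub (lat_add (lat_add hu0 hu1) hu2) hrl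
  have hw : w = (1 - μ0) • u0 + (1 - μ1) • u1 + (1 - μ2) • u2 := by
    rw [hwdef, hr]; module
  have hwhull : w ∈ convexHull ℝ ({u0, u1, u2} : Set (Fin 2 → ℝ)) :=
    mem_hull3 (α := 1 - μ0) (β := 1 - μ1) (γ := 1 - μ2) (by linarith) (by linarith) (by linarith)
      (by linarith) hw
  have key : (μ0 / (1 - μ0)) * (1 - μ0) = μ0 := div_mul_cancel₀ _ (ne_of_gt hg0)
  set ν0 : ℝ := μ0 / (1 - μ0) with hν0def
  set ν1 : ℝ := μ1 - ν0 * (1 - μ1) with hν1def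
  set ν2 : ℝ := μ2 - ν0 * (1 - μ2) with hν2def
  have hν0 : 0 ≤ ν0 := div_nonneg (le_of_lt h0l) (le_of_lt hg0)
  have hν1 : 0 ≤ ν1 := by
    rw [hν1def, sub_nonneg, hν0def, div_mul_eq_mul_div, div_le_iff₀ hg0]
    linarith [hmin1]
  have hν2 : 0 ≤ ν2 := by
    rw [hν2def, sub_nonneg, hν0def, div_mul_eq_mul_div, div_le_iff₀ hg0]
    linarith [hmin2]
  have hνs : ν0 + ν1 + ν2 = 2 := by
    rw [hν1def, hν2def]; linear_combination key + (ν0 + 1) * hs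
  have hrw : r = ν0 • w + ν1 • u1 + ν2 • u2 := by
    rw [hr, hw, hν1def, hν2def]
    have hne : (1 : ℝ) - μ0 ≠ 0 := ne_of_gt hg0
    match_scalars
    · field_simp
      linarith [key]
    · ring
    · ring
  have hdet' : det2 (u1 - w) (u2 - w) = (1 - μ0) * det2 (u1 - u0) (u2 - u0) := by
    have hμ2 : μ2 = 2 - μ0 - μ1 := by linarith
    have h0 := congrFun hw 0
    have h1 := congrFun hw 1
    simp only [Pi.add_apply, Pi.smul_apply, smul_eq_mul] at h0 h1
    rw [hμ2] at h0 h1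
    simp only [det2, Pi.sub_apply]
    rw [h0, h1]
    ring
  have hDpos : 0 < |det2 (u1 - u0) (u2 - u0)| := abs_pos.2 hD
  have hD' : det2 (u1 - w) (u2 - w) ≠ 0 := by
    rw [hdet']; exact mul_ne_zero (ne_of_gt hg0) hD
  have hlt : |det2 (u1 - w) (u2 - w)| < |det2 (u1 - u0) (u2 - u0)| := by
    rw [hdet', abs_mul, abs_of_pos hg0]
    nlinarith
  have hDle' : |det2 (u1 - w) (u2 - w)| ≤ (n : ℝ) := by
    obtain ⟨z, hz⟩ := det2_int (lat_sub hu1 hwlat) (lat_sub hu2 hwlat)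
    rw [hz] at hlt ⊢
    have h1 : |(z : ℝ)| < (n : ℝ) + 1 := lt_of_lt_of_le hlt hDle
    have h2 : |z| < (n : ℤ) + 1 := by exact_mod_cast h1
    have h3 : |z| ≤ (n : ℤ) := by omega
    exact_mod_cast h3
  have hGood : Good {w, u1, u2} r :=
    IH w u1 u2 r ν0 ν1 ν2 hwlat hu1 hu2 hrl hν0 hν1 hν2 hνs hrw hD' hDle'
  obtain ⟨a, b, ha, hal, hb, hbl, hab⟩ := hGood
  have hsub : convexHull ℝ ({w, u1, u2} : Set (Fin 2 → ℝ)) ⊆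
      convexHull ℝ ({u0, u1, u2} : Set (Fin 2 → ℝ)) := by
    apply convexHull_min _ (convex_convexHull ℝ _)
    intro x hx
    rcases hx with rfl | rfl | rfl
    · exact hwhull
    · exact subset_convexHull ℝ _ (by simp)
    · exact subset_convexHull ℝ _ (by simp)
  exact ⟨a, b, hsub ha, hal, hsub hb, hbl, hab⟩

lemma core : ∀ n : ℕ, CoreP n := by
  intro n
  induction n with
  | zero =>
    intro u0 u1 u2 r μ0 μ1 μ2 _ _ _ _ _ _ _ _ _ hD hDle
    exact absurd (abs_eq_zero.1 (le_antisymm (by exact_mod_cast hDle) (abs_nonneg _))) hD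
  | succ n IH =>
    intro u0 u1 u2 r μ0 μ1 μ2 hu0 hu1 hu2 hrl h0l h1l h2l hs hr hD hDle
    push_cast at hDle
    by_cases hb0 : 1 ≤ μ0
    · exact peel hu0 hrl hb0 h1l h2l hs hr
    by_cases hb1 : 1 ≤ μ1
    · have := peel (u0 := u1) (u1 := u0) (u2 := u2) hu1 hrl hb1 h0l h2l (by linarith)
        (by rw [hr]; module)
      rwa [Good, set_perm1] at this
    by_cases hb2 : 1 ≤ μ2
    · have := peel (u0 := u2) (u1 := u0) (u2 := u1) hu2 hrl hb2 h0l h1l (by linarith)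
        (by rw [hr]; module)
      rwa [Good, set_perm2] at this
    push_neg at hb0 hb1 hb2
    have hp0 : 0 < μ0 := by linarith
    have hp1 : 0 < μ1 := by linarith
    have hp2 : 0 < μ2 := by linarith
    have hg0 : 0 < 1 - μ0 := by linarith
    have hg1 : 0 < 1 - μ1 := by linarith
    have hg2 : 0 < 1 - μ2 := by linarith
    by_cases c01 : μ0 * (1 - μ1) ≤ μ1 * (1 - μ0)
    · by_cases c02 : μ0 * (1 - μ2) ≤ μ2 * (1 - μ0)
      · exact coreB IH u0 u1 u2 r μ0 μ1 μ2 hu0 hu1 hu2 hrl hp0 hb0 h1l hb1 h2l hb2 hs hr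
          c01 c02 hD hDle
      · -- minimum at index 2
        push_neg at c02
        have m20 : μ2 * (1 - μ0) ≤ μ0 * (1 - μ2) := le_of_lt c02
        have m21 : μ2 * (1 - μ1) ≤ μ1 * (1 - μ2) := by nlinarith
        have := coreB IH u2 u0 u1 r μ2 μ0 μ1 hu2 hu0 hu1 hrl hp2 hb2 h0l hb0 h1l hb1
          (by linarith) (by rw [hr]; module) m20 m21
          (by rw [det2_perm2]; exact hD) (by rw [det2_perm2]; exact hDle)
        rwa [Good, set_perm2] at this
    · push_neg at c01
      by_cases c12 : μ1 * (1 - μ2) ≤ μ2 * (1 - μ1)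
      · -- minimum at index 1
        have := coreB IH u1 u0 u2 r μ1 μ0 μ2 hu1 hu0 hu2 hrl hp1 hb1 h0l hb0 h2l hb2
          (by linarith) (by rw [hr]; module) (le_of_lt c01) c12
          (by rw [det2_perm1]; simpa using hD) (by rw [det2_perm1, abs_neg]; exact hDle)
        rwa [Good, set_perm1] at this
      · -- minimum at index 2
        push_neg at c12
        have m21 : μ2 * (1 - μ1) ≤ μ1 * (1 - μ2) := le_of_lt c12
        have m20 : μ2 * (1 - μ0) ≤ μ0 * (1 - μ2) := by nlinarith
        have := coreB IH u2 u0 u1 r μ2 μ0 μ1 hu2 hu0 hu1 hrl hp2 hb2 h0l hb0 h1l hb1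
          (by linarith) (by rw [hr]; module) m20 m21
          (by rw [det2_perm2]; exact hD) (by rw [det2_perm2]; exact hDle)
        rwa [Good, set_perm2] at this

lemma collinear_of_det2 {v : Fin 3 → (Fin 2 → ℝ)} (h : det2 (v 1 - v 0) (v 2 - v 0) = 0) :
    Collinear ℝ (Set.range v) := by
  set A : Fin 2 → ℝ := v 1 - v 0 with hA
  set B : Fin 2 → ℝ := v 2 - v 0 with hB
  rw [collinear_iff_of_mem (Set.mem_range_self 0)]
  by_cases hA0 : A = 0
  · refine ⟨B, ?_⟩
    rintro p ⟨i, rfl⟩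
    fin_cases i
    · exact ⟨0, by simp⟩
    · refine ⟨0, ?_⟩
      have : v 1 = v 0 := by
        have := hA ▸ hA0
        have h2 : v 1 - v 0 = 0 := by rw [← hA]; exact hA0
        linear_combination (norm := abel) h2
      simp [this]
    · exact ⟨1, by simp [hB, vadd_eq_add]⟩
  · have hdet : A 0 * B 1 - A 1 * B 0 = 0 := h
    have hex : ∃ τ : ℝ, B = τ • A := by
      by_cases h0 : A 0 ≠ 0
      · refine ⟨B 0 / A 0, ?_⟩
        funext i
        fin_cases i
        · simp [Pi.smul_apply]; field_simp
        · simp only [Pi.smul_apply, smul_eq_mul]; field_simp; simp only [Fin.mk_one, Fin.isValue]; linear_combination hdet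
      · push_neg at h0
        have h1 : A 1 ≠ 0 := by
          intro h1; apply hA0; funext i; fin_cases i <;> simp [h0, h1]
        refine ⟨B 1 / A 1, ?_⟩
        funext i
        fin_cases i
        · have hb : A 1 * B 0 = 0 := by rw [h0] at hdet; linarith [hdet]
          have : B 0 = 0 := (mul_eq_zero.1 hb).resolve_left h1
          simp [Pi.smul_apply, this, h0]
        · simp [Pi.smul_apply]; field_simp
    obtain ⟨τ, hτ⟩ := hex
    refine ⟨A, ?_⟩
    rintro p ⟨i, rfl⟩
    fin_cases i
    · exact ⟨0, by simp⟩
    · exact ⟨1, by simp [hA, vadd_eq_add]⟩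
    · exact ⟨τ, by
        have : v 2 = τ • A + v 0 := by rw [← hτ, hB]; abel
        simp [vadd_eq_add, this]⟩

lemma det_ne_of_ai {v : Fin 3 → (Fin 2 → ℝ)} (hai : AffineIndependent ℝ v) :
    det2 (v 1 - v 0) (v 2 - v 0) ≠ 0 := fun hdet =>
  (affineIndependent_iff_not_collinear.1 hai) (collinear_of_det2 hdet)

theorem sumset_lattice_eq (P : Set (Fin 2 → ℝ)) (hP : IsLatticePolytope 2 P)
    (h : ℕ) (hh : 0 < h) :
    sumset 2 h (P ∩ latticePts 2) = sumset 2 h P ∩ latticePts 2 := by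
  classical
  obtain ⟨S, hSne, hSlat, hPeq⟩ := hP
  have hPconv : Convex ℝ P := hPeq ▸ convex_convexHull ℝ _
  ext y
  simp only [Set.mem_inter_iff]
  constructor
  · rintro ⟨f, hf, rfl⟩
    exact ⟨⟨f, fun i => (hf i).1, rfl⟩, lat_sum Finset.univ f fun i _ => (hf i).2⟩
  · rintro ⟨⟨f, hf, hyf⟩, hylat⟩
    have hh0 : (h : ℝ) ≠ 0 := Nat.cast_ne_zero.2 hh.ne'
    have hxP : (h : ℝ)⁻¹ • y ∈ P := by
      rw [hyf, Finset.smul_sum]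
      refine hPconv.sum_mem (w := fun _ => (h : ℝ)⁻¹) (fun i _ => by positivity) ?_ fun i _ => hf i
      rw [Finset.sum_const, Finset.card_univ, Fintype.card_fin, nsmul_eq_mul]
      field_simp
    have hy : y = (h : ℝ) • ((h : ℝ)⁻¹ • y) := (smul_inv_smul₀ hh0 y).symm
    have hxhull : (h : ℝ)⁻¹ • y ∈ convexHull ℝ (S : Set (Fin 2 → ℝ)) := hPeq ▸ hxP
    obtain ⟨ι, hfin, z, wt, hrange, hai, hwpos, hw1, hwx⟩ :=
      eq_pos_convex_span_of_mem_convexHull hxhull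
    letI := hfin
    obtain ⟨m, he⟩ : ∃ m, Nonempty (ι ≃ Fin m) := ⟨_, ⟨Fintype.equivFin ι⟩⟩
    obtain ⟨e⟩ := he
    set v : Fin m → (Fin 2 → ℝ) := z ∘ e.symm with hv
    set w' : Fin m → ℝ := wt ∘ e.symm with hw'
    have hvx : ∑ i, w' i • v i = (h : ℝ)⁻¹ • y :=
      (Equiv.sum_comp e.symm fun j => wt j • z j).trans hwx
    have hw'1 : ∑ i, w' i = 1 := (Equiv.sum_comp e.symm wt).trans hw1
    have hai' : AffineIndependent ℝ v := (affineIndependent_equiv e.symm).2 hai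
    have hvS : ∀ i, v i ∈ (S : Set (Fin 2 → ℝ)) := fun i => hrange (Set.mem_range_self _)
    have hvP : ∀ i, v i ∈ P := fun i => hPeq ▸ subset_convexHull ℝ _ (hvS i)
    have hvlat : ∀ i, v i ∈ latticePts 2 := fun i => hSlat (hvS i)
    have hm3 : m ≤ 3 := by
      have h1 := hai'.card_le_finrank_succ
      have h2 : Module.finrank ℝ (vectorSpan ℝ (Set.range v)) ≤ 2 := by
        have h3 := Submodule.finrank_le (vectorSpan ℝ (Set.range v))
        rwa [show Module.finrank ℝ (Fin 2 → ℝ) = 2 from by rw [Module.finrank_pi]; simp] at h3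
      rw [Fintype.card_fin] at h1
      omega
    have hm1 : 0 < m := by
      rcases Nat.eq_zero_or_pos m with hm0 | hm
      · exfalso; subst hm0; simp at hw'1
      · exact hm
    haveI : Nonempty (Fin m) := ⟨⟨0, hm1⟩⟩
    set μ : Fin m → ℝ := fun i => (h : ℝ) * w' i with hμ
    set c : Fin m → ℕ := fun i => ⌊μ i⌋₊ with hc
    have hμ0 : ∀ i, 0 ≤ μ i := fun i => mul_nonneg (Nat.cast_nonneg h) (le_of_lt (hwpos _))
    have hy2 : y = ∑ i, μ i • v i := by
      rw [hy, ← hvx, Finset.smul_sum]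
      exact Finset.sum_congr rfl fun i _ => smul_smul _ _ _
    set r : Fin 2 → ℝ := y - ∑ i, (c i : ℝ) • v i with hrdef
    have hrlat : r ∈ latticePts 2 :=
      lat_sub hylat (lat_sum _ _ fun i _ => lat_nsmul (hvlat i) (c i))
    have hrf : r = ∑ i, (μ i - c i) • v i := by
      rw [hrdef, hy2, ← Finset.sum_sub_distrib]
      exact Finset.sum_congr rfl fun i _ => (sub_smul _ _ _).symm
    have hfl : ∀ i, 0 ≤ μ i - c i := fun i => sub_nonneg.2 (Nat.floor_le (hμ0 i))
    have hfu : ∀ i, μ i - c i < 1 := fun i => by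
      have := Nat.lt_floor_add_one (μ i); simp only [hc]; linarith
    have hSmu : ∑ i, μ i = (h : ℝ) := by
      simp only [hμ]; rw [← Finset.mul_sum, hw'1, mul_one]
    have hScle : ∑ i, c i ≤ h := by
      have hcast : ((∑ i, c i : ℕ) : ℝ) ≤ (h : ℝ) := by
        push_cast
        calc ∑ i, (c i : ℝ) ≤ ∑ i, μ i :=
              Finset.sum_le_sum fun i _ => Nat.floor_le (hμ0 i)
          _ = (h : ℝ) := hSmu
      exact_mod_cast hcast
    obtain ⟨k, hkc⟩ : ∃ k, ∑ i, c i + k = h := ⟨h - ∑ i, c i, Nat.add_sub_cancel' hScle⟩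
    have hkr : (k : ℝ) = ∑ i, (μ i - c i) := by
      rw [Finset.sum_sub_distrib, hSmu]
      have hcast : ((∑ i, c i : ℕ) : ℝ) + (k : ℝ) = (h : ℝ) := by exact_mod_cast hkc
      push_cast at hcast ⊢
      linarith
    have hkm : k < m := by
      have hcast : (k : ℝ) < m := by
        rw [hkr]
        calc ∑ i, (μ i - c i) < ∑ _i : Fin m, (1 : ℝ) :=
              Finset.sum_lt_sum_of_nonempty Finset.univ_nonempty fun i _ => hfu i
          _ = m := by simp
      exact_mod_cast hcast
    have hyrep : y = (∑ i, (c i : ℝ) • v i) + r := by rw [hrdef]; abel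
    have hsumpart := rep_sum (X := P ∩ latticePts 2) Finset.univ c v fun i _ => ⟨hvP i, hvlat i⟩
    have hrrep : r ∈ sumset 2 k (P ∩ latticePts 2) := by
      have hk2 : k ≤ 2 := by omega
      interval_cases k
      · -- k = 0
        have hz0 : ∀ i ∈ Finset.univ, μ i - c i = 0 :=
          (Finset.sum_eq_zero_iff_of_nonneg fun i _ => hfl i).1 (by exact_mod_cast hkr.symm)
        have hr0 : r = 0 := by
          rw [hrf]; exact Finset.sum_eq_zero fun i hi => by rw [hz0 i hi, zero_smul]
        rw [hr0]; exact rep_zero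
      · -- k = 1
        refine rep_one ⟨?_, hrlat⟩
        rw [hrf]
        refine hPconv.sum_mem (fun i _ => hfl i) ?_ fun i _ => hvP i
        rw [← hkr]; norm_num
      · -- k = 2
        have hm3' : m = 3 := by omega
        subst hm3'
        obtain ⟨zD, hzD⟩ := det2_int (lat_sub (hvlat 1) (hvlat 0)) (lat_sub (hvlat 2) (hvlat 0))
        have hD : det2 (v 1 - v 0) (v 2 - v 0) ≠ 0 := det_ne_of_ai hai'
        have hDle : |det2 (v 1 - v 0) (v 2 - v 0)| ≤ (zD.natAbs : ℝ) := by
          rw [hzD, Nat.cast_natAbs, Int.cast_abs]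
        have hGood := core zD.natAbs (v 0) (v 1) (v 2) r (μ 0 - c 0) (μ 1 - c 1) (μ 2 - c 2)
          (hvlat 0) (hvlat 1) (hvlat 2) hrlat (hfl 0) (hfl 1) (hfl 2)
          (by have h4 := hkr; rw [Fin.sum_univ_three] at h4; push_cast at h4; linarith)
          (by rw [hrf, Fin.sum_univ_three]) hD hDle
        obtain ⟨a, b, hah, hal, hbh, hbl, hab⟩ := hGood
        have hsub : convexHull ℝ ({v 0, v 1, v 2} : Set (Fin 2 → ℝ)) ⊆ P := by
          apply convexHull_min _ hPconv
          rintro x (rfl | rfl | rfl) <;> exact hvP _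
        rw [hab]; exact rep_two ⟨hsub hah, hal⟩ ⟨hsub hbh, hbl⟩
    rw [hyrep, ← hkc]
    exact rep_add hsumpart hrrep
end

section
/- Let T' be a lattice triangle in ℝ² with vertices a, b, c whose only lattice points are its vertices, and let h be a positive integer. If w ∈ ℤ² satisfies w/h ∈ T' (i.e., w ∈ h ∗ T'), then there exist nonnegative integers i, j, k with i + j + k = h and w = i·a + j·b + k·c. -/
open MeasureTheory Pointwise

section helpers
variable {E : Type*} [AddCommGroup E] [Module ℝ E]

lemma mem_triple_hull {a b c x : E} (hx : x ∈ convexHull ℝ ({a, b, c} : Set E)) :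
    ∃ α β γ : ℝ, 0 ≤ α ∧ 0 ≤ β ∧ 0 ≤ γ ∧ α + β + γ = 1 ∧ x = α • a + β • b + γ • c := by
  rw [show ({a, b, c} : Set E) = insert a {b, c} from rfl,
    convexHull_insert ⟨b, by simp⟩, convexHull_pair] at hx
  rw [mem_convexJoin] at hx
  obtain ⟨a', ha', y, hy, hseg⟩ := hx
  rw [Set.mem_singleton_iff] at ha'; subst ha'
  obtain ⟨s, t, hs, ht, hst, hy⟩ := hy
  obtain ⟨u, v, hu, hv, huv, hx⟩ := hseg
  refine ⟨u, v * s, v * t, hu, mul_nonneg hv hs, mul_nonneg hv ht, by nlinarith, ?_⟩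
  rw [← hx, ← hy]; module

lemma triple_hull_mem {a b c x : E} {α β γ : ℝ} (hα : 0 ≤ α) (hβ : 0 ≤ β) (hγ : 0 ≤ γ)
    (hs : α + β + γ = 1) (hx : x = α • a + β • b + γ • c) :
    x ∈ convexHull ℝ ({a, b, c} : Set E) := by
  have := Finset.centerMass_mem_convexHull (Finset.univ : Finset (Fin 3))
    (w := ![α, β, γ]) (z := ![a, b, c]) (s := {a, b, c})
    (by intro i _; fin_cases i <;> assumption)
    (by simp [Fin.sum_univ_three]; linarith)
    (by intro i _; fin_cases i <;> simp)
  rwa [Finset.centerMass_eq_of_sum_1 _ _ (by simp [Fin.sum_univ_three]; linarith),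
    Fin.sum_univ_three, show (![α, β, γ] 0 : ℝ) = α from rfl,
    show (![α, β, γ] 1 : ℝ) = β from rfl, show (![α, β, γ] 2 : ℝ) = γ from rfl,
    show (![a, b, c] 0 : E) = a from rfl, show (![a, b, c] 1 : E) = b from rfl,
    show (![a, b, c] 2 : E) = c from rfl, ← hx] at this

end helpers

theorem rep_in_dilated_primitive_triangle
    (a b c : Fin 2 → ℝ) (ha : a ∈ latticePts 2) (hb : b ∈ latticePts 2)
    (hc : c ∈ latticePts 2) (hncol : ¬ Collinear ℝ ({a, b, c} : Set (Fin 2 → ℝ)))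
    (T' : Set (Fin 2 → ℝ)) (hT : T' = convexHull ℝ {a, b, c})
    (hprim : T' ∩ latticePts 2 = {a, b, c})
    (h : ℕ) (hh : 0 < h)
    (w : Fin 2 → ℝ) (hwl : w ∈ latticePts 2) (hw : w ∈ dilate 2 h T') :
    ∃ i j k : ℕ, i + j + k = h ∧ w = (i : ℝ) • a + (j : ℝ) • b + (k : ℝ) • c := by
  -- linear independence of b - a, c - a
  have hai : AffineIndependent ℝ ![a, b, c] :=
    affineIndependent_iff_not_collinear_set.mpr hncol
  have hli : ∀ s t : ℝ, s • (b - a) + t • (c - a) = 0 → s = 0 ∧ t = 0 := by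
    intro s t hst
    rw [affineIndependent_iff] at hai
    have key := hai Finset.univ ![-s - t, s, t]
      (by simp [Fin.sum_univ_three]; ring)
      (by
        rw [Fin.sum_univ_three]
        show (-s - t) • a + s • b + t • c = 0
        have : s • (b - a) + t • (c - a) = (-s - t) • a + s • b + t • c := by
          module
        rw [← this, hst])
    constructor
    · have := key 1 (Finset.mem_univ _); simpa using this
    · have := key 2 (Finset.mem_univ _); simpa using this
  -- extract barycentric coordinates
  obtain ⟨x, hxT, hwx⟩ := hw
  rw [hT] at hxT
  obtain ⟨α', β', γ', hα', hβ', hγ', hsum', hxeq⟩ := mem_triple_hull hxT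
  set β : ℝ := h * β' with hβdef
  set γ : ℝ := h * γ' with hγdef
  have hβ0 : 0 ≤ β := mul_nonneg (Nat.cast_nonneg h) hβ'
  have hγ0 : 0 ≤ γ := mul_nonneg (Nat.cast_nonneg h) hγ'
  have hβγh : β + γ ≤ h := by nlinarith [mul_nonneg (Nat.cast_nonneg h : (0:ℝ) ≤ h) hα']
  have hweq : w = (h - β - γ) • a + β • b + γ • c := by
    rw [hwx, hxeq]
    have hα : α' = 1 - β' - γ' := by linarith
    rw [hα, hβdef, hγdef]
    module
  clear hwx hxeq hxT hsum' hα' hβ' hγ' hβdef hγdef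
  -- w = h•a + β•(b-a) + γ•(c-a)
  have hweq2 : w = (h : ℝ) • a + β • (b - a) + γ • (c - a) := by
    rw [hweq]; module
  -- fractional parts
  set fβ := Int.fract β with hfβ
  set fγ := Int.fract γ with hfγ
  have hfβ0 : 0 ≤ fβ := Int.fract_nonneg β
  have hfγ0 : 0 ≤ fγ := Int.fract_nonneg γ
  have hfβ1 : fβ < 1 := Int.fract_lt_one β
  have hfγ1 : fγ < 1 := Int.fract_lt_one γ
  -- the point p = a + fβ•(b-a) + fγ•(c-a) is a lattice point
  set p : Fin 2 → ℝ := a + fβ • (b - a) + fγ • (c - a) with hp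
  have hpeq : p = w + (1 - (h : ℝ)) • a - (⌊β⌋ : ℝ) • (b - a) - (⌊γ⌋ : ℝ) • (c - a) := by
    rw [hp, hweq2, hfβ, hfγ, Int.fract, Int.fract]
    module
  have hplat : p ∈ latticePts 2 := by
    intro i
    obtain ⟨za, hza⟩ := ha i
    obtain ⟨zb, hzb⟩ := hb i
    obtain ⟨zc, hzc⟩ := hc i
    obtain ⟨zw, hzw⟩ := hwl i
    refine ⟨zw + (1 - (h : ℤ)) * za - ⌊β⌋ * (zb - za) - ⌊γ⌋ * (zc - za), ?_⟩
    rw [hpeq]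
    simp only [Pi.add_apply, Pi.sub_apply, Pi.smul_apply, smul_eq_mul]
    rw [hza, hzb, hzc, hzw]
    push_cast
    ring
  -- helper to find contradiction or conclusion
  have hfrac0 : fβ = 0 ∧ fγ = 0 := by
    by_cases hcase : fβ + fγ ≤ 1
    · -- p is in the triangle
      have hpT : p ∈ T' := by
        rw [hT]
        refine triple_hull_mem (α := 1 - fβ - fγ) (β := fβ) (γ := fγ)
          (by linarith) hfβ0 hfγ0 (by ring) ?_
        rw [hp]; module
      have : p ∈ ({a, b, c} : Set (Fin 2 → ℝ)) := hprim ▸ ⟨hpT, hplat⟩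
      rcases this with hpa | hpb | hpc
      · -- p = a ⟹ fβ = fγ = 0
        have h2 : a + fβ • (b - a) + fγ • (c - a) = a := hpa
        exact hli _ _ (by linear_combination (norm := module) h2)
      · -- p = b ⟹ fβ = 1, contradiction
        exfalso
        have h2 : a + fβ • (b - a) + fγ • (c - a) = b := hpb
        have := (hli (fβ - 1) fγ (by linear_combination (norm := module) h2)).1
        linarith
      · -- p = c ⟹ fγ = 1, contradiction
        exfalso
        have h2 : a + fβ • (b - a) + fγ • (c - a) = c := hpc
        have := (hli fβ (fγ - 1) (by linear_combination (norm := module) h2)).2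
        linarith
    · -- fβ + fγ > 1 : consider q = b + c - p
      exfalso
      push_neg at hcase
      set q : Fin 2 → ℝ := b + c - p with hq
      have hqrep : q = (fβ + fγ - 1) • a + (1 - fβ) • b + (1 - fγ) • c := by
        rw [hq, hp]
        module
      have hqlat : q ∈ latticePts 2 := by
        intro i
        obtain ⟨zb, hzb⟩ := hb i
        obtain ⟨zc, hzc⟩ := hc i
        obtain ⟨zp, hzp⟩ := hplat i
        exact ⟨zb + zc - zp, by
          rw [hq]; simp only [Pi.add_apply, Pi.sub_apply]
          rw [hzb, hzc, hzp]; push_cast; ring⟩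
      have hqT : q ∈ T' := by
        rw [hT]
        exact triple_hull_mem (α := fβ + fγ - 1) (β := 1 - fβ) (γ := 1 - fγ)
          (by linarith) (by linarith) (by linarith) (by ring) hqrep
      have : q ∈ ({a, b, c} : Set (Fin 2 → ℝ)) := hprim ▸ ⟨hqT, hqlat⟩
      have hqa : q - a = (1 - fβ) • (b - a) + (1 - fγ) • (c - a) := by
        rw [hqrep]; module
      rcases this with hx | hx | hx
      · rw [hx, sub_self] at hqa
        have := (hli _ _ hqa.symm).1; linarith
      · rw [hx] at hqa
        have := (hli (-fβ) (1 - fγ) (by linear_combination (norm := module) hqa.symm)).2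
        linarith
      · rw [hx] at hqa
        have := (hli (1 - fβ) (-fγ) (by linear_combination (norm := module) hqa.symm)).1
        linarith
  -- conclude: β, γ are nonnegative integers
  obtain ⟨hfb, hfg⟩ := hfrac0
  have hβint : β = (⌊β⌋ : ℝ) := by
    have h2 : β - (⌊β⌋ : ℝ) = 0 := hfb
    linarith
  have hγint : γ = (⌊γ⌋ : ℝ) := by
    have h2 : γ - (⌊γ⌋ : ℝ) = 0 := hfg
    linarith
  have hβfloor0 : 0 ≤ ⌊β⌋ := Int.le_floor.mpr (by exact_mod_cast hβ0)
  have hγfloor0 : 0 ≤ ⌊γ⌋ := Int.le_floor.mpr (by exact_mod_cast hγ0)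
  set j := ⌊β⌋.toNat with hjdef
  set k := ⌊γ⌋.toNat with hkdef
  have hjβ : (j : ℝ) = β := by
    have h2 : ((j : ℤ) : ℝ) = β := by
      rw [hjdef, Int.toNat_of_nonneg hβfloor0]; exact hβint.symm
    exact_mod_cast h2
  have hkγ : (k : ℝ) = γ := by
    have h2 : ((k : ℤ) : ℝ) = γ := by
      rw [hkdef, Int.toNat_of_nonneg hγfloor0]; exact hγint.symm
    exact_mod_cast h2
  have hjk : j + k ≤ h := by
    have : (j : ℝ) + (k : ℝ) ≤ (h : ℝ) := by rw [hjβ, hkγ]; linarith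
    exact_mod_cast this
  refine ⟨h - (j + k), j, k, by omega, ?_⟩
  rw [hweq, hjβ, hkγ]
  have : ((h - (j + k) : ℕ) : ℝ) = (h : ℝ) - β - γ := by
    rw [Nat.cast_sub hjk]; push_cast; rw [hjβ, hkγ]; ring
  rw [this]
end
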